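/- arXiv:1505.02632 — 6 statements merged into one kernel-verified Lean document; each statement's English description precedes it below -/
import Mathlib

section
/- Let d, n, a be natural numbers with d dividing n and gcd(a,n) = 1, and let π_a : Z_n → Z_n be the permutation π_a(x) = a·x (mod n). Then the restriction τ of π_a to the set Ω_n^d of elements of additive order d is a permutation of Ω_n^d, every cycle of τ has length k = r_a(d) (the multiplicative order of a modulo d), and τ has exactly φ(d)/r_a(d) cycles. In particular, for every x ∈ Z_n of additive order d, the least s ≥ 1 with a^s·x ≡ x (mod n) equals r_a(d). -/
open Function MulAction Subgroup

private lemma rcs_iterate {n : ℕ} [NeZero n] (a : ZMod n) (s : ℕ) (x : ZMod n) :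
    (fun y : ZMod n => a * y)^[s] x = a ^ s * x := by
  induction s with
  | zero => simp
  | succ s ih => rw [Function.iterate_succ_apply', ih, pow_succ]; ring



/-- Let `d ∣ n`, `gcd(a,n) = 1`, and let `π_a : ℤ_n → ℤ_n` be
`x ↦ a·x`. Then `π_a` restricts to a permutation `τ` of the set `Ω_n^d` of elements
of additive order `d`; every cycle of `τ` has length `k = r_a(d)`, the multiplicative
order of `a` modulo `d`; `τ` has exactly `φ(d)/r_a(d)` cycles; and for every `x` of
additive order `d`, the least `s ≥ 1` with `a^s·x ≡ x (mod n)` equals `r_a(d)`. -/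
theorem restriction_cycle_structure (n d a : ℕ) [NeZero n] (hd : d ∣ n)
    (ha : Nat.Coprime a n) :
    -- τ is a permutation of Ω_n^d
    (∀ x : ZMod n, addOrderOf x = d ↔ addOrderOf ((a : ZMod n) * x) = d) ∧
    -- every cycle of τ has length r_a(d)
    (∀ x : ZMod n, addOrderOf x = d →
      Function.minimalPeriod (fun y : ZMod n => (a : ZMod n) * y) x
        = orderOf (a : ZMod d)) ∧
    -- τ has exactly φ(d)/r_a(d) cycles
    Nat.card (Quot fun x y : {x : ZMod n // addOrderOf x = d} =>
        (MulAction.toPerm (ZMod.unitOfCoprime a ha)).SameCycle x.val y.val)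
      = Nat.totient d / orderOf (a : ZMod d) ∧
    -- the least s ≥ 1 with a^s·x = x equals r_a(d)
    (∀ x : ZMod n, addOrderOf x = d →
      sInf {s : ℕ | 1 ≤ s ∧ (a : ZMod n) ^ s * x = x} = orderOf (a : ZMod d)) := by
  classical
  have hn : 0 < n := Nat.pos_of_ne_zero (NeZero.ne n)
  have hd0 : 0 < d := Nat.pos_of_dvd_of_pos hd hn
  haveI : NeZero d := ⟨hd0.ne'⟩
  have had : Nat.Coprime a d := Nat.Coprime.coprime_dvd_right hd ha
  set k := orderOf (a : ZMod d) with hk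
  have hkpos : 0 < k := by
    have h1 : (a : ZMod d) = ((ZMod.unitOfCoprime a had : (ZMod d)ˣ) : ZMod d) := by
      simp [ZMod.coe_unitOfCoprime]
    rw [hk, h1, orderOf_units]
    exact orderOf_pos _
  -- key equivalence
  have key : ∀ x : ZMod n, addOrderOf x = d → ∀ s : ℕ, ((a : ZMod n) ^ s * x = x ↔ k ∣ s) := by
    intro x hx s
    have h1 : (a : ZMod n) ^ s * x = x ↔ (((a : ℤ) ^ s - 1) : ℤ) • x = 0 := by
      rw [zsmul_eq_mul]
      push_cast
      rw [sub_mul, one_mul, sub_eq_zero]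
    rw [h1, ← addOrderOf_dvd_iff_zsmul_eq_zero, hx,
      ← ZMod.intCast_zmod_eq_zero_iff_dvd]
    push_cast
    rw [sub_eq_zero]
    exact orderOf_dvd_iff_pow_eq_one.symm
  -- part 1
  have part1 : ∀ x : ZMod n, addOrderOf x = d ↔ addOrderOf ((a : ZMod n) * x) = d := by
    intro x
    have hinj : Function.Injective (fun y : ZMod n => (a : ZMod n) * y) := by
      have h2 : IsUnit (a : ZMod n) := ⟨ZMod.unitOfCoprime a ha, ZMod.coe_unitOfCoprime a ha⟩
      exact h2.mul_right_injective
    have h3 : addOrderOf ((a : ZMod n) * x) = addOrderOf x :=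
      addOrderOf_injective (AddMonoidHom.mulLeft (a : ZMod n)) hinj x
    rw [h3]
  -- part 2
  have part2 : ∀ x : ZMod n, addOrderOf x = d →
      Function.minimalPeriod (fun y : ZMod n => (a : ZMod n) * y) x = k := by
    intro x hx
    have hiter : ∀ s : ℕ,
        Function.IsPeriodicPt (fun y : ZMod n => (a : ZMod n) * y) s x ↔ k ∣ s := by
      intro s
      rw [Function.IsPeriodicPt, Function.IsFixedPt, rcs_iterate]
      exact key x hx s
    exact Nat.dvd_antisymm
      (Function.IsPeriodicPt.minimalPeriod_dvd ((hiter k).mpr dvd_rfl))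
      ((hiter _).mp (Function.isPeriodicPt_minimalPeriod _ _))
  -- part 4
  have part4 : ∀ x : ZMod n, addOrderOf x = d →
      sInf {s : ℕ | 1 ≤ s ∧ (a : ZMod n) ^ s * x = x} = k := by
    intro x hx
    refine le_antisymm (Nat.sInf_le ⟨hkpos, (key x hx k).mpr dvd_rfl⟩)
      (le_csInf ⟨k, hkpos, (key x hx k).mpr dvd_rfl⟩
        fun s hs => Nat.le_of_dvd hs.1 ((key x hx s).mp hs.2))
  refine ⟨part1, part2, ?_, part4⟩
  -- part 3
  set u := ZMod.unitOfCoprime a ha with hu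
  have hcu : ((u : (ZMod n)ˣ) : ZMod n) = (a : ZMod n) := ZMod.coe_unitOfCoprime a ha
  have hmem : ∀ x : ZMod n, addOrderOf x = d ↔ addOrderOf (MulAction.toPerm u x) = d := by
    intro x
    have h4 : MulAction.toPerm u x = (a : ZMod n) * x := by
      simp [MulAction.toPerm_apply, Units.smul_def, hcu]
    rw [h4]
    exact part1 x
  set τ : Equiv.Perm {x : ZMod n // addOrderOf x = d} :=
    (MulAction.toPerm u).subtypePerm (fun x => (hmem x).symm) with hτ
  have hval : ∀ (i : ℤ) (b : {x : ZMod n // addOrderOf x = d}),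
      ((τ ^ i) b).val = ((MulAction.toPerm u) ^ i) b.val := by
    intro i b
    rw [hτ, Equiv.Perm.subtypePerm_zpow]
    rfl
  have hr : ∀ x y : {x : ZMod n // addOrderOf x = d},
      (MulAction.toPerm u).SameCycle x.val y.val ↔ ∃ i : ℤ, (τ ^ i) x = y := by
    intro x y
    exact exists_congr fun i => by rw [Subtype.ext_iff, hval]
  have hrel : ∀ x y : {x : ZMod n // addOrderOf x = d},
      (MulAction.toPerm u).SameCycle x.val y.val ↔
        orbitRel (zpowers τ) {x : ZMod n // addOrderOf x = d} x y := by
    intro x y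
    rw [orbitRel_apply, mem_orbit_iff]
    constructor
    · intro hxy
      obtain ⟨i, hi⟩ := (hr y x).mp hxy.symm
      exact ⟨⟨τ ^ i, zpow_mem (mem_zpowers τ) i⟩, hi⟩
    · rintro ⟨⟨g, hg⟩, hgy⟩
      obtain ⟨i, rfl⟩ := mem_zpowers_iff.mp hg
      exact ((hr y x).mpr ⟨i, hgy⟩).symm
  have equot : Nat.card (Quot fun x y : {x : ZMod n // addOrderOf x = d} =>
        (MulAction.toPerm u).SameCycle x.val y.val)
      = Nat.card (orbitRel.Quotient (zpowers τ) {x : ZMod n // addOrderOf x = d}) :=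
    Nat.card_congr (Quot.congrRight hrel)
  have hper : ∀ b : {x : ZMod n // addOrderOf x = d},
      Function.minimalPeriod (τ • ·) b = k := by
    intro b
    have hiter : ∀ s : ℕ, Function.IsPeriodicPt (τ • ·) s b ↔ k ∣ s := by
      intro s
      rw [Function.IsPeriodicPt, Function.IsFixedPt, smul_iterate_apply]
      have hsb : (τ ^ s • b) = (τ ^ (s : ℤ)) b := by
        rw [zpow_natCast]; rfl
      rw [hsb, Subtype.ext_iff, hval]
      have hp : ((MulAction.toPerm u) ^ (s : ℤ)) b.val = (a : ZMod n) ^ s * b.val := by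
        rw [zpow_natCast, ← MulAction.toPermHom_apply, ← map_pow, MulAction.toPermHom_apply,
          MulAction.toPerm_apply, Units.smul_def, Units.val_pow_eq_pow_val, hcu, smul_eq_mul]
      rw [hp]
      exact key b.val b.prop s
    exact Nat.dvd_antisymm
      (Function.IsPeriodicPt.minimalPeriod_dvd ((hiter k).mpr dvd_rfl))
      ((hiter _).mp (Function.isPeriodicPt_minimalPeriod _ _))
  have horb : ∀ ω : orbitRel.Quotient (zpowers τ) {x : ZMod n // addOrderOf x = d},
      Nat.card ω.orbit = k := by
    intro ω
    rw [orbitRel.Quotient.orbit_eq_orbit_out ω Quotient.out_eq']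
    haveI := Fintype.ofFinite
      (orbit (zpowers τ) (Quotient.out ω) : Set {x : ZMod n // addOrderOf x = d})
    rw [Nat.card_eq_fintype_card, ← minimalPeriod_eq_card]
    exact hper _
  haveI : Fintype (orbitRel.Quotient (zpowers τ) {x : ZMod n // addOrderOf x = d}) :=
    Fintype.ofFinite _
  have hsum : Nat.card {x : ZMod n // addOrderOf x = d}
      = Nat.card (orbitRel.Quotient (zpowers τ) {x : ZMod n // addOrderOf x = d}) * k := by
    rw [Nat.card_congr (selfEquivSigmaOrbits' (zpowers τ) {x : ZMod n // addOrderOf x = d})]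
    haveI : ∀ ω : orbitRel.Quotient (zpowers τ) {x : ZMod n // addOrderOf x = d},
        Fintype ω.orbit := fun ω => Fintype.ofFinite _
    rw [Nat.card_eq_fintype_card, Fintype.card_sigma, Nat.card_eq_fintype_card,
      Finset.sum_congr rfl (fun ω _ => by rw [← Nat.card_eq_fintype_card, horb ω])]
    simp [Finset.sum_const, Finset.card_univ, mul_comm]
  have hcardS : Nat.card {x : ZMod n // addOrderOf x = d} = Nat.totient d := by
    have hd2 : d ∣ Fintype.card (ZMod n) := by rwa [ZMod.card]
    have h6 := IsAddCyclic.card_addOrderOf_eq_totient (α := ZMod n) (d := d) hd2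
    rw [Nat.card_eq_fintype_card, Fintype.card_subtype]
    convert h6 using 2
  rw [equot, ← hcardS, hsum, Nat.mul_div_cancel _ hkpos]
end

section
/- Let n, a be natural numbers with gcd(a,n) = 1 and let π_a : Z_n → Z_n be the permutation π_a(x) = a·x (mod n). Then for every natural number ℓ, the number of cycles of length ℓ in the disjoint cycle decomposition of π_a equals (1/ℓ)·Σ φ(d), where the sum is over all divisors d of n with r_a(d) = ℓ. Equivalently, the cycle type of π_a is Π_{d | n} x_{r_a(d)}^{φ(d)/r_a(d)}. -/
open Function Finset

private lemma aux_iter (n a : ℕ) (x : ZMod n) (k : ℕ) :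
    (fun z : ZMod n => (a : ZMod n) * z)^[k] x = (a : ZMod n) ^ k * x := by
  induction k with
  | zero => simp
  | succ k ih => rw [Function.iterate_succ_apply', ih, ← mul_assoc, ← pow_succ']

private lemma aux_periodic (n a : ℕ) [NeZero n] (x : ZMod n) (k : ℕ) :
    Function.IsPeriodicPt (fun z : ZMod n => (a : ZMod n) * z) k x ↔
      orderOf (a : ZMod (addOrderOf x)) ∣ k := by
  haveI : NeZero (addOrderOf x) := ⟨(addOrderOf_pos x).ne'⟩
  rw [Function.IsPeriodicPt, Function.IsFixedPt, aux_iter]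
  have h1 : (a : ZMod n) ^ k * x = x ↔ ((a : ℤ) ^ k - 1) • x = 0 := by
    rw [zsmul_eq_mul]
    push_cast
    rw [sub_mul, sub_eq_zero, one_mul]
  have h2 : (((a : ℤ) ^ k - 1 : ℤ) : ZMod (addOrderOf x))
      = (a : ZMod (addOrderOf x)) ^ k - 1 := by push_cast; ring
  rw [h1, ← addOrderOf_dvd_iff_zsmul_eq_zero, ← ZMod.intCast_zmod_eq_zero_iff_dvd,
    h2, sub_eq_zero]
  exact orderOf_dvd_iff_pow_eq_one.symm

private lemma aux_ord_pos (a d : ℕ) (hd : d ≠ 0) (had : Nat.Coprime a d) :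
    0 < orderOf (a : ZMod d) := by
  haveI : NeZero d := ⟨hd⟩
  have h : (a : ZMod d) = ((ZMod.unitOfCoprime a had : (ZMod d)ˣ) : ZMod d) :=
    (ZMod.coe_unitOfCoprime a had).symm
  rw [h, orderOf_units]
  exact orderOf_pos _

private lemma aux_minPeriod (n a : ℕ) [NeZero n] (x : ZMod n) :
    Function.minimalPeriod (fun z : ZMod n => (a : ZMod n) * z) x
      = orderOf (a : ZMod (addOrderOf x)) := by
  apply Nat.dvd_antisymm
  · exact Function.IsPeriodicPt.minimalPeriod_dvd ((aux_periodic n a x _).2 dvd_rfl)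
  · exact (aux_periodic n a x _).1 (Function.isPeriodicPt_minimalPeriod _ _)

private lemma aux_count (n d : ℕ) [NeZero n] (hd : d ∣ n) :
    (Finset.univ.filter fun x : ZMod n => addOrderOf x = d).card = Nat.totient d := by
  classical
  have h := IsAddCyclic.card_addOrderOf_eq_totient (α := ZMod n) (d := d)
    (by simpa [ZMod.card] using hd)
  simpa using h

/-- Let `gcd(a,n) = 1` and `π_a : ℤ_n → ℤ_n`, `π_a(x) = a·x`. For
every `ℓ`, the number of cycles of length `ℓ` in the disjoint cycle decomposition of
`π_a` (fixed points counting as `1`-cycles) equals `(1/ℓ)·Σ_{d ∣ n, r_a(d) = ℓ} φ(d)`;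
equivalently, `ℓ` times the number of `ℓ`-cycles equals the sum of `φ(d)` over
divisors `d` of `n` with `r_a(d) = ℓ`. -/
theorem cycle_count_eq_totient_sum (n a : ℕ) [NeZero n] (ha : Nat.Coprime a n)
    (ℓ : ℕ) :
    ℓ * Nat.card (Quot fun x y :
        {x : ZMod n // Function.minimalPeriod (fun z : ZMod n => (a : ZMod n) * z) x = ℓ} =>
        (MulAction.toPerm (ZMod.unitOfCoprime a ha)).SameCycle x.val y.val)
      = ∑ d ∈ n.divisors.filter (fun d => orderOf (a : ZMod d) = ℓ), Nat.totient d := by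
  classical
  set f : ZMod n → ZMod n := fun z => (a : ZMod n) * z with hf
  set σ : Equiv.Perm (ZMod n) := MulAction.toPerm (ZMod.unitOfCoprime a ha) with hσ
  have hσf : ⇑σ = f := by
    funext x
    simp [hσ, hf, MulAction.toPerm_apply, Units.smul_def, ZMod.coe_unitOfCoprime]
  have hpow : ∀ k : ℕ, ⇑(σ ^ k) = f^[k] := by
    intro k; rw [Equiv.Perm.coe_pow, hσf]
  rcases Nat.eq_zero_or_pos ℓ with rfl | hℓ
  · rw [zero_mul, Finset.filter_false_of_mem, Finset.sum_empty]
    intro d hd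
    exact (aux_ord_pos a d (Nat.pos_of_mem_divisors hd).ne'
      (ha.coprime_dvd_right (Nat.dvd_of_mem_divisors hd))).ne'
  -- notation
  set S := {x : ZMod n // Function.minimalPeriod f x = ℓ} with hS
  set r : S → S → Prop := fun x y => σ.SameCycle x.val y.val with hr
  have hrequiv : Equivalence r := ⟨fun x => Equiv.Perm.SameCycle.refl σ x.val,
    fun h => h.symm, fun h h' => h.trans h'⟩
  -- each same-cycle class has ℓ elements
  have class_card : ∀ x : ZMod n, Function.minimalPeriod f x = ℓ →
      Nat.card {y : ZMod n // σ.SameCycle x y} = ℓ := by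
    intro x hx
    have hmem : ∀ k : ℕ, σ.SameCycle x (f^[k] x) := fun k =>
      ⟨(k : ℤ), by rw [zpow_natCast, hpow k]⟩
    let g : Fin ℓ → {y : ZMod n // σ.SameCycle x y} := fun k => ⟨f^[(k : ℕ)] x, hmem k⟩
    have hginj : Function.Injective g := by
      intro j k hjk
      exact Fin.ext <| Function.iterate_injOn_Iio_minimalPeriod
        (by simpa [hx] using j.isLt) (by simpa [hx] using k.isLt)
        (congrArg Subtype.val hjk)
    have hgsurj : Function.Surjective g := by
      rintro ⟨y, hy⟩
      obtain ⟨i, -, hi⟩ := hy.exists_pow_eq'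
      refine ⟨⟨i % ℓ, Nat.mod_lt _ hℓ⟩, Subtype.ext ?_⟩
      show f^[i % ℓ] x = y
      have h1 : f^[i % Function.minimalPeriod f x] x = f^[i] x :=
        Function.iterate_mod_minimalPeriod_eq
      rw [hx] at h1
      rw [h1, ← hpow i, hi]
    rw [Nat.card_congr (Equiv.ofBijective g ⟨hginj, hgsurj⟩).symm]
    simp
  -- same cycle preserves minimal period
  have hsame_min : ∀ x y : ZMod n, Function.minimalPeriod f x = ℓ →
      σ.SameCycle x y → Function.minimalPeriod f y = ℓ := by
    intro x y hx hxy
    obtain ⟨i, -, hi⟩ := hxy.exists_pow_eq'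
    have hxper : x ∈ Function.periodicPts f :=
      Function.minimalPeriod_pos_iff_mem_periodicPts.1 (hx ▸ hℓ)
    rw [← hi, hpow i, Function.minimalPeriod_apply_iterate hxper, hx]
  -- fibers of the quotient map
  haveI : Fintype (Quot r) := Fintype.ofFinite _
  have fiber_card : ∀ q : Quot r, Nat.card {s : S // Quot.mk r s = q} = ℓ := by
    intro q
    induction q using Quot.ind with
    | _ x0 =>
      have hquot : ∀ s : S, Quot.mk r s = Quot.mk r x0 ↔ r s x0 := fun s => by
        rw [Quot.eq]; exact hrequiv.eqvGen_iff
      have e : {s : S // Quot.mk r s = Quot.mk r x0} ≃ {y : ZMod n // σ.SameCycle x0.val y} :=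
        { toFun := fun p => ⟨p.1.1, ((hquot p.1).1 p.2).symm⟩
          invFun := fun y => ⟨⟨y.1, hsame_min x0.1 y.1 x0.2 y.2⟩, (hquot _).2 y.2.symm⟩
          left_inv := fun p => Subtype.ext (Subtype.ext rfl)
          right_inv := fun y => rfl }
      rw [Nat.card_congr e]
      exact class_card x0.1 x0.2
  -- total count
  have htotal : Nat.card S = Nat.card (Quot r) * ℓ := by
    have h1 := Nat.card_congr (Equiv.sigmaFiberEquiv (Quot.mk r)).symm
    rw [h1, Nat.card_eq_fintype_card, Fintype.card_sigma]
    simp_rw [← Nat.card_eq_fintype_card, fiber_card]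
    simp [Nat.card_eq_fintype_card, Finset.sum_const, mul_comm]
  -- count points with minimal period ℓ via divisors
  have hSfin : Nat.card S = (Finset.univ.filter
      fun x : ZMod n => Function.minimalPeriod f x = ℓ).card := by
    rw [Nat.card_eq_fintype_card, Fintype.card_subtype]
  have hT : (Finset.univ.filter fun x : ZMod n => Function.minimalPeriod f x = ℓ).card
      = ∑ d ∈ n.divisors.filter (fun d => orderOf (a : ZMod d) = ℓ), Nat.totient d := by
    rw [Finset.card_eq_sum_card_fiberwise (f := fun x : ZMod n => addOrderOf x)
      (t := n.divisors.filter (fun d => orderOf (a : ZMod d) = ℓ))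
      (by
        intro x hx
        rw [Finset.mem_coe, Finset.mem_filter] at hx ⊢
        refine ⟨Nat.mem_divisors.2 ⟨?_, NeZero.ne n⟩, ?_⟩
        · simpa [ZMod.card] using addOrderOf_dvd_card (x := x)
        · rw [← aux_minPeriod n a x]; exact hx.2)]
    apply Finset.sum_congr rfl
    intro d hd
    rw [Finset.mem_filter] at hd
    rw [← aux_count n d (Nat.dvd_of_mem_divisors hd.1)]
    congr 1
    ext x
    simp only [Finset.mem_filter, Finset.mem_univ, true_and]
    constructor
    · exact fun h => h.2
    · intro h
      refine ⟨?_, h⟩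
      rw [aux_minPeriod n a x, h, hd.2]
  rw [← hT, ← hSfin, htotal, mul_comm]
end

section
/- Let l ≥ 1, s ≥ 0 be integers and let r be an odd natural number, and set a = −3^{2^s · r}. Then the multiplicative order r_a(2^l) of a modulo 2^l is: 1 if l = 1; 1 if l = 2 and s = 0; 2 if l = 2 and s ≥ 1; 2^{l−2−s} if l ≥ 3 and s < l−2; and 2 if l ≥ 3 and s ≥ l−2. -/
set_option linter.unreachableTactic false
set_option linter.unusedTactic false

/-- `(1+q*a)^t = 1 + q*b` for some `b`. -/
lemma L1 (q a t : ℕ) : ∃ b, (1 + q*a)^t = 1 + q*b := by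
  induction t with
  | zero => exact ⟨0, by ring⟩
  | succ t ih =>
    obtain ⟨b, hb⟩ := ih
    exact ⟨b + a + q*a*b, by rw [pow_succ, hb]; ring⟩

lemma L2 (c u : ℕ) (hu : Odd u) :
    ∃ v, Odd v ∧ (1 + 2^(c+2)*u)^2 = 1 + 2^(c+3)*v := by
  refine ⟨u + 2^(c+1)*u^2, hu.add_even ⟨2^c*u^2, by ring⟩, by ring⟩

lemma L3 (k : ℕ) : ∃ u, Odd u ∧ 3^(2^(k+1)) = 1 + 2^(k+3)*u := by
  induction k with
  | zero => exact ⟨1, odd_one, by norm_num⟩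
  | succ k ih =>
    obtain ⟨u, hu, h⟩ := ih
    obtain ⟨v, hv, hv2⟩ := L2 (k+1) u hu
    refine ⟨v, hv, ?_⟩
    have : (2:ℕ)^(k+2) = 2^(k+1) * 2 := by ring
    rw [this, pow_mul, h]
    convert hv2 using 3 <;> ring

lemma L4 (k m : ℕ) (hm : Odd m) :
    ∃ u, Odd u ∧ 3^(2^(k+1)*m) = 1 + 2^(k+3)*u := by
  obtain ⟨u, hu, h3⟩ := L3 k
  obtain ⟨t, rfl⟩ := hm
  obtain ⟨v, hv, hv2⟩ := L2 (k+1) u (by exact_mod_cast hu)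
  obtain ⟨b, hb⟩ := L1 (2^(k+4)) v t
  have he : Even (2*b + 2^(k+4)*b*u) := ⟨b + 2^(k+3)*b*u, by ring⟩
  refine ⟨u + (2*b + 2^(k+4)*b*u), hu.add_even he, ?_⟩
  have : 3^(2^(k+1)*(2*t+1)) = ((3^(2^(k+1)))^2)^t * 3^(2^(k+1)) := by
    rw [← pow_mul, ← pow_mul, ← pow_add]; ring_nf
  rw [this, h3]
  have hsq : (1 + 2^(k+3)*u)^2 = 1 + 2^(k+4)*v := by
    convert hv2 using 3 <;> ring
  rw [hsq, hb]; ring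

lemma L5 (r : ℕ) (hr : Odd r) : ∃ b, 3^r = 3 + 8*b := by
  obtain ⟨t, rfl⟩ := hr
  obtain ⟨b, hb⟩ := L1 8 1 t
  refine ⟨3*b, ?_⟩
  have : (3:ℕ)^(2*t+1) = (3^2)^t * 3 := by rw [← pow_mul, pow_succ]
  rw [this]; norm_num [hb]; ring

lemma cast_one_add (M u : ℕ) : ((1 + M * u : ℕ) : ZMod M) = 1 := by
  push_cast
  rw [ZMod.natCast_self]
  ring

lemma ordNegOne (l : ℕ) (hl : 2 ≤ l) : orderOf (-1 : ZMod (2^l)) = 2 := by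
  have hp : Fact (Nat.Prime 2) := ⟨Nat.prime_two⟩
  refine orderOf_eq_prime (by rw [neg_one_sq]) ?_
  intro h
  have h2 : ((2:ℕ) : ZMod (2^l)) = 0 := by push_cast; linear_combination -h
  have hd : 2^l ∣ 2 := (ZMod.natCast_eq_zero_iff 2 (2^l)).mp h2
  have h4 : 4 ≤ 2^l := by
    calc (4:ℕ) = 2^2 := by norm_num
    _ ≤ 2^l := Nat.pow_le_pow_right (by norm_num) hl
  have := Nat.le_of_dvd (by norm_num) hd
  omega


lemma zmod1_3 : (3 : ZMod (2^1)) = 1 := by decide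
lemma zmod1_neg : (-1 : ZMod (2^1)) = 1 := by decide
lemma zmod2_3 : (3 : ZMod (2^2)) = -1 := by decide

/-- Let `l ≥ 1`, `s ≥ 0`, `r` odd, and `a = −3^(2^s·r)`. Then the
multiplicative order of `a` modulo `2^l` is: `1` if `l = 1`; `1` if `l = 2, s = 0`;
`2` if `l = 2, s ≥ 1`; `2^(l−2−s)` if `l ≥ 3, s < l−2`; and `2` if `l ≥ 3, s ≥ l−2`. -/
theorem orderOf_neg_three_pow_mod_two_pow (l s r : ℕ) (hl : 1 ≤ l) (hr : Odd r) :
    orderOf (-(3 : ZMod (2 ^ l)) ^ (2 ^ s * r)) =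
      if l = 1 then 1
      else if l = 2 then (if s = 0 then 1 else 2)
      else if s < l - 2 then 2 ^ (l - 2 - s) else 2 := by
  have hp : Fact (Nat.Prime 2) := ⟨Nat.prime_two⟩
  obtain rfl | rfl | hl3 : l = 1 ∨ l = 2 ∨ 3 ≤ l := by omega
  · -- l = 1
    rw [if_pos rfl]
    have h3 : (3 : ZMod (2^1)) = 1 := zmod1_3
    have hm : (-1 : ZMod (2^1)) = 1 := zmod1_neg
    rw [h3, one_pow, hm, orderOf_one]
  · -- l = 2
    rw [if_neg (by norm_num), if_pos rfl]
    have h3 : (3 : ZMod (2^2)) = -1 := zmod2_3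
    rw [h3]
    rcases Nat.eq_zero_or_pos s with hs | hs
    · subst hs
      rw [if_pos rfl, pow_zero, one_mul, hr.neg_one_pow, neg_neg, orderOf_one]
    · rw [if_neg (by omega)]
      have he : Even (2^s * r) := ⟨2^(s-1)*r, by
        obtain ⟨s', rfl⟩ := Nat.exists_eq_add_of_le hs
        simp [pow_succ, pow_add]
        ring⟩
      rw [he.neg_one_pow]
      exact ordNegOne 2 le_rfl
  · -- l = n + 3
    obtain ⟨n, rfl⟩ : ∃ n, l = n + 3 := ⟨l - 3, by omega⟩
    rw [if_neg (by omega), if_neg (by omega)]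
    have h32 : n + 3 - 2 = n + 1 := by omega
    rw [h32]
    have hcast3 : (3 : ZMod (2^(n+3))) = ((3:ℕ) : ZMod (2^(n+3))) := by push_cast; ring
    by_cases hs : s < n + 1
    · rw [if_pos hs]
      obtain ⟨e, rfl⟩ : ∃ e, n = s + e := ⟨n - s, by omega⟩
      have hne : s + e + 1 - s = e + 1 := by omega
      rw [hne]
      refine orderOf_eq_prime_pow ?_ ?_
      · -- a ^ 2^e ≠ 1
        rcases e with _ | e'
        · -- e = 0
          rw [pow_zero, pow_one]
          rcases s with _ | m
          · -- s = 0 : in ZMod (2^3), -3^r = -(3+8b) ≠ 1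
            obtain ⟨b, hb⟩ := L5 r hr
            have hnat : (3:ℕ)^(2^0*r) = 3 + 8*b := by rw [pow_zero, one_mul, hb]
            intro h
            rw [hcast3, ← Nat.cast_pow, hnat] at h
            have hz : ((4 + 8*b : ℕ) : ZMod (2^(0+0+3))) = 0 := by
              push_cast at h ⊢; linear_combination -h
            have hd := (ZMod.natCast_eq_zero_iff _ _).mp hz
            have h8 : (2:ℕ)^(0+0+3) ∣ 8*b := ⟨b, by norm_num⟩
            obtain ⟨c, hc⟩ := hd
            norm_num at hc
            omega
          · -- s = m+1
            obtain ⟨u, hu, hnat⟩ := L4 m r hr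
            intro h
            rw [hcast3, ← Nat.cast_pow, hnat] at h
            have hz : ((2 + 2^(m+3)*u : ℕ) : ZMod (2^(m+1+0+3))) = 0 := by
              push_cast at h ⊢; linear_combination -h
            have hd := (ZMod.natCast_eq_zero_iff _ _).mp hz
            have h4a : (2:ℕ)^2 ∣ 2^(m+1+0+3) := pow_dvd_pow 2 (by omega)
            have htrans := h4a.trans hd
            have h4b : (2:ℕ)^2 ∣ 2^(m+3)*u := (pow_dvd_pow 2 (by omega)).mul_right u
            obtain ⟨c, hc⟩ := htrans
            obtain ⟨d, hdd⟩ := h4b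
            rw [hdd] at hc
            norm_num at hc
            omega
        · -- e = e'+1
          have hev : Even (2^(e'+1)) := ⟨2^e', by ring⟩
          rw [hev.neg_pow, ← pow_mul]
          have hexp : 2^s*r*2^(e'+1) = 2^(s+e'+1)*r := by ring
          rw [hexp]
          obtain ⟨u, hu, hnat⟩ := L4 (s+e') r hr
          intro h
          rw [hcast3, ← Nat.cast_pow, hnat] at h
          have hz : ((2^(s+e'+3)*u : ℕ) : ZMod (2^(s+(e'+1)+3))) = 0 := by
            push_cast at h ⊢; linear_combination h
          have hd := (ZMod.natCast_eq_zero_iff _ _).mp hz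
          have hM : (2:ℕ)^(s+(e'+1)+3) = 2^(s+e'+3)*2 := by ring
          rw [hM] at hd
          have h2u : (2:ℕ) ∣ u :=
            (mul_dvd_mul_iff_left (pow_ne_zero _ (two_ne_zero))).mp hd
          rw [Nat.odd_iff] at hu
          omega
      · -- a ^ 2^(e+1) = 1
        have hev : Even (2^(e+1)) := ⟨2^e, by ring⟩
        rw [hev.neg_pow, ← pow_mul]
        have hexp : 2^s*r*2^(e+1) = 2^(s+e+1)*r := by ring
        rw [hexp]
        obtain ⟨u, hu, hnat⟩ := L4 (s+e) r hr
        rw [hcast3, ← Nat.cast_pow, hnat]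
        exact cast_one_add _ u
    · rw [if_neg hs]
      -- s ≥ n+1 : 3^(2^s r) = 1, a = -1
      obtain ⟨d, rfl⟩ := Nat.exists_eq_add_of_le (not_lt.mp hs)
      obtain ⟨u, hu, h3⟩ := L3 n
      obtain ⟨b, hb⟩ := L1 (2^(n+3)) u (2^d * r)
      have hnat : (3:ℕ)^(2^(n+1+d)*r) = 1 + 2^(n+3)*b := by
        rw [show 2^(n+1+d)*r = 2^(n+1)*(2^d*r) by rw [pow_add]; ring, pow_mul, h3, hb]
      have hone : (3 : ZMod (2^(n+3)))^(2^(n+1+d)*r) = 1 := by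
        rw [hcast3, ← Nat.cast_pow, hnat]
        exact cast_one_add _ b
      rw [hone]
      exact ordNegOne (n+3) (by omega)
end

section
/- Let m ≥ 3 be an integer and let r be an odd natural number. Then the permutation π_a of Z_{2^m} given by multiplication by a = 3^r has cycle type x_1^2 · x_2 · Π_{l=3}^{m} x_{2^{l−2}}^2; that is, it has exactly 2 fixed points, exactly one 2-cycle, and for each l with 3 ≤ l ≤ m exactly two cycles of length 2^{l−2}. -/
/-- 3^odd ≡ 3 mod 4 -/
lemma three_pow_odd_mod4 {t : ℕ} (ht : Odd t) : (4:ℤ) ∣ 3^t - 3 := by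
  obtain ⟨s, rfl⟩ := ht
  have h8 : (8:ℤ) ∣ 9^s - 1 := by
    have := sub_dvd_pow_sub_pow (9:ℤ) 1 s
    simpa using this
  have : (3:ℤ)^(2*s+1) - 3 = 3 * (9^s - 1) := by
    rw [pow_succ, pow_mul]; ring_nf
  rw [this]
  exact dvd_trans (by norm_num) (Dvd.dvd.mul_left h8 3)

lemma three_pow_mod8 (t : ℕ) : (8:ℤ) ∣ 3^t - 1 ∨ (8:ℤ) ∣ 3^t - 3 := by
  rcases Nat.even_or_odd t with he | ho
  · obtain ⟨s, rfl⟩ := he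
    left
    have := sub_dvd_pow_sub_pow (9:ℤ) 1 s
    have h : (3:ℤ)^(s+s) = 9^s := by rw [← two_mul, pow_mul]; norm_num
    simpa [h] using this
  · obtain ⟨s, rfl⟩ := ho
    right
    have := sub_dvd_pow_sub_pow (9:ℤ) 1 s
    have h : (3:ℤ)^(2*s+1) - 3 = 3 * (9^s - 1) := by rw [pow_succ, pow_mul]; ring_nf
    rw [h]
    exact Dvd.dvd.mul_left (by simpa using this) 3

/-- 3^(2^(k+1)) = 1 + 2^(k+3) * odd -/
lemma three_pow_two_pow (k : ℕ) : ∃ u : ℤ, Odd u ∧ (3:ℤ)^(2^(k+1)) = 1 + 2^(k+3) * u := by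
  induction k with
  | zero => exact ⟨1, odd_one, by norm_num⟩
  | succ k ih =>
    obtain ⟨u, hu, h⟩ := ih
    refine ⟨u + 2^(k+2) * u^2, ?_, ?_⟩
    · rcases hu with ⟨c, rfl⟩
      exact ⟨c + 2^(k+1) * (2*c+1)^2, by ring⟩
    · have : (2:ℕ)^(k+2) = 2^(k+1) * 2 := by rw [pow_succ]
      rw [this, pow_mul, h]
      ring

lemma odd_geom_sum {x : ℤ} (hx : Odd x) {v : ℕ} (hv : Odd v) :
    Odd (∑ i ∈ Finset.range v, x^i) := by
  rw [Int.odd_iff, ← Int.emod_emod_of_dvd _ (by norm_num : (2:ℤ) ∣ 2)]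
  have h2 : ¬ ((∑ i ∈ Finset.range v, x^i : ℤ) : ZMod 2) = 0 := by
    have hx2 : ((x : ℤ) : ZMod 2) = 1 := by
      have : ¬ (2:ℤ) ∣ x := by
        rw [Int.odd_iff] at hx; omega
      have := (ZMod.intCast_zmod_eq_zero_iff_dvd x 2).not.mpr this
      revert this; generalize ((x : ℤ) : ZMod 2) = z; revert z; decide
    push_cast [hx2]
    simp only [one_pow, Finset.sum_const, Finset.card_range, nsmul_eq_mul, mul_one]
    have : ((v : ℕ) : ZMod 2) = 1 := by
      rcases hv with ⟨s, rfl⟩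
      push_cast
      rw [show ((2 : ZMod 2)) = 0 from rfl]
      ring
    rw [this]; decide
  rw [Int.odd_iff] at *
  by_contra h
  have : (2:ℤ) ∣ (∑ i ∈ Finset.range v, x^i) := by omega
  exact h2 ((ZMod.intCast_zmod_eq_zero_iff_dvd _ 2).mpr this)

/-- exact valuation for even exponent: 3^(2^(k+1) v) - 1 = 2^(k+3) * odd, v odd -/
lemma three_pow_even_val (k : ℕ) {v : ℕ} (hv : Odd v) :
    ∃ u : ℤ, Odd u ∧ (3:ℤ)^(2^(k+1) * v) - 1 = 2^(k+3) * u := by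
  obtain ⟨u₀, hu₀, hX⟩ := three_pow_two_pow k
  set X : ℤ := (3:ℤ)^(2^(k+1)) with hXdef
  have hXodd : Odd X := by
    rw [hX]; rcases hu₀ with ⟨c, rfl⟩; exact ⟨2^(k+2) * (2*c+1), by ring⟩
  have hgeom := geom_sum_mul X v
  refine ⟨u₀ * (∑ i ∈ Finset.range v, X^i), hu₀.mul (odd_geom_sum hXodd hv), ?_⟩
  have : (3:ℤ)^(2^(k+1) * v) = X^v := by rw [hXdef, ← pow_mul]
  rw [this, ← hgeom, hX]
  ring

/-- dvd criterion, l ≥ 3 -/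
lemma dvd_three_pow_sub_one {l : ℕ} (hl : 3 ≤ l) (t : ℕ) :
    (2^l : ℤ) ∣ 3^t - 1 ↔ 2^(l-2) ∣ t := by
  constructor
  · intro h
    by_contra hnd
    have ht0 : t ≠ 0 := by rintro rfl; simp at hnd
    obtain ⟨e, v, hv2, rfl⟩ := Nat.exists_eq_pow_mul_and_not_dvd ht0 2 (by norm_num)
    have hvodd : Odd v := Nat.odd_iff.mpr (by omega)
    have helt : e < l - 2 := by
      by_contra he
      push_neg at he
      exact hnd (dvd_mul_of_dvd_left (pow_dvd_pow 2 he) v)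
    rcases Nat.eq_zero_or_pos e with rfl | hepos
    · -- t odd
      simp only [pow_zero, one_mul] at h ⊢
      have h4 : (4:ℤ) ∣ 3^v - 1 := dvd_trans (by
        calc (4:ℤ) = 2^2 := by norm_num
        _ ∣ 2^l := pow_dvd_pow 2 (by omega)) h
      have h43 := three_pow_odd_mod4 hvodd
      omega
    · obtain ⟨k, rfl⟩ := Nat.exists_eq_add_of_le hepos
      rw [show Nat.succ 0 + k = k + 1 from by omega] at h
      obtain ⟨u, hu, hval⟩ := three_pow_even_val k hvodd
      have h2l : (2:ℤ)^(k+4) ∣ 2^(k+3) * u := by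
        refine dvd_trans (pow_dvd_pow 2 (by omega)) (hval ▸ h)
      have : (2:ℤ) ∣ u := by
        have hd : (2:ℤ)^(k+3) * 2 ∣ 2^(k+3) * u := by rw [← pow_succ]; exact h2l
        exact (mul_dvd_mul_iff_left (show ((2:ℤ)^(k+3)) ≠ 0 by positivity)).mp hd
      rw [Int.odd_iff] at hu; omega
  · rintro ⟨c, rfl⟩
    have hX : (2^l : ℤ) ∣ (3:ℤ)^(2^(l-2)) - 1 := by
      obtain ⟨u, hu, h⟩ := three_pow_two_pow (l-3)
      rw [show l - 3 + 1 = l - 2 from by omega, show l - 3 + 3 = l from by omega] at h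
      exact ⟨u, by rw [h]; ring⟩
    calc (2^l : ℤ) ∣ (3:ℤ)^(2^(l-2)) - 1 := hX
      _ ∣ ((3:ℤ)^(2^(l-2)))^c - 1 := by simpa using sub_dvd_pow_sub_pow ((3:ℤ)^(2^(l-2))) 1 c
      _ = 3^(2^(l-2) * c) - 1 := by rw [← pow_mul]

lemma not_dvd_three_pow_add_one {l : ℕ} (hl : 3 ≤ l) (t : ℕ) : ¬ (2^l : ℤ) ∣ 3^t + 1 := by
  intro h
  have h8 : (8:ℤ) ∣ 3^t + 1 := dvd_trans (by simpa using pow_dvd_pow (2:ℤ) hl) h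
  rcases three_pow_mod8 t with h1 | h3 <;> omega

lemma dvd_four_three_pow_sub_one (t : ℕ) : (4 : ℤ) ∣ 3^t - 1 ↔ 2 ∣ t := by
  constructor
  · intro h
    by_contra hodd
    have := three_pow_odd_mod4 (t:=t) (Nat.odd_iff.mpr (by omega))
    omega
  · rintro ⟨s, rfl⟩
    have : (8:ℤ) ∣ 9^s - 1 := by simpa using sub_dvd_pow_sub_pow (9:ℤ) 1 s
    have h9 : (3:ℤ)^(2*s) = 9^s := by rw [pow_mul]; norm_num
    rw [h9]; omega

lemma step_up {l : ℕ} (hl : 3 ≤ l) {w : ℤ} {j : ℕ}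
    (h : (2^l : ℤ) ∣ 3^j - w) : ∃ j', (2^(l+1) : ℤ) ∣ 3^j' - w := by
  obtain ⟨c, hc⟩ := h
  rcases Int.even_or_odd c with ⟨c', rfl⟩ | hcodd
  · exact ⟨j, ⟨c', by rw [hc]; ring⟩⟩
  · obtain ⟨u, hu, hX⟩ := three_pow_two_pow (l-3)
    rw [show l - 3 + 1 = l - 2 from by omega, show l - 3 + 3 = l from by omega] at hX
    refine ⟨j + 2^(l-2), ?_⟩
    have h3ju : Odd ((3:ℤ)^j * u) := Odd.mul (Odd.pow ⟨1, by norm_num⟩) hu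
    obtain ⟨a, ha⟩ := hcodd
    obtain ⟨b, hb⟩ := h3ju
    refine ⟨a + b + 1, ?_⟩
    have hexp : (3:ℤ)^(j + 2^(l-2)) = 3^j * (1 + 2^l * u) := by rw [pow_add, hX]
    have : (3:ℤ)^(j + 2^(l-2)) - w = 2^l * c + 2^l * (3^j * u) := by
      rw [hexp]; rw [sub_eq_iff_eq_add] at hc; rw [hc]; ring
    rw [this, ha, hb, pow_succ]
    ring

lemma exists_three_pow_mod {l : ℕ} (hl : 3 ≤ l) {w : ℤ} (hw : Odd w) :
    ∃ j, (2^l : ℤ) ∣ 3^j - w ∨ (2^l : ℤ) ∣ 3^j + w := by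
  induction l, hl using Nat.le_induction with
  | base =>
    obtain ⟨s, rfl⟩ := hw
    have h8 : (2*s+1) % 8 = 1 ∨ (2*s+1) % 8 = 3 ∨ (2*s+1) % 8 = 5 ∨ (2*s+1) % 8 = 7 := by omega
    rcases h8 with h | h | h | h
    · exact ⟨0, Or.inl (by norm_num; omega)⟩
    · exact ⟨1, Or.inl (by norm_num; omega)⟩
    · exact ⟨1, Or.inr (by norm_num; omega)⟩
    · exact ⟨0, Or.inr (by norm_num; omega)⟩
  | succ l hl ih =>
    rcases ih with ⟨j, hj | hj⟩
    · obtain ⟨j', hj'⟩ := step_up hl hj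
      exact ⟨j', Or.inl hj'⟩
    · obtain ⟨j', hj'⟩ := step_up hl (w := -w) (by rw [sub_neg_eq_add]; exact hj)
      exact ⟨j', Or.inr (by rw [sub_neg_eq_add] at hj'; exact hj')⟩

open Equiv Equiv.Perm Finset

lemma multiset_map_eq_sum {ι β : Type*} [DecidableEq ι] (t : Finset ι) (f : ι → β) :
    t.1.map f = ∑ i ∈ t, ({f i} : Multiset β) := by
  induction t using Finset.induction_on with
  | empty => simp
  | @insert a s ha ih =>
    rw [Finset.sum_insert ha, Finset.insert_val_of_notMem ha, Multiset.map_cons, ← ih]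
    rfl

lemma cycleType_eq_sum_reps {α : Type*} [Fintype α] [DecidableEq α] (σ : Equiv.Perm α)
    {ι : Type*} [DecidableEq ι] (t : Finset ι) (ρ : ι → α)
    (h1 : ∀ i ∈ t, ρ i ∈ σ.support)
    (h2 : ∀ i ∈ t, ∀ j ∈ t, i ≠ j → ¬ σ.SameCycle (ρ i) (ρ j))
    (h3 : ∀ y ∈ σ.support, ∃ i ∈ t, σ.SameCycle (ρ i) y) :
    σ.cycleType = ∑ i ∈ t, {(σ.cycleOf (ρ i)).support.card} := by
  classical
  have hinj : Set.InjOn (fun i => σ.cycleOf (ρ i)) t := by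
    intro i hi j hj hij
    simp only [] at hij
    by_contra hne
    have hmem : ρ i ∈ (σ.cycleOf (ρ i)).support :=
      mem_support_cycleOf_iff.mpr ⟨SameCycle.refl σ (ρ i), h1 i hi⟩
    rw [hij] at hmem
    exact h2 j hj i hi (Ne.symm hne) (mem_support_cycleOf_iff.mp hmem).1
  have hfact : σ.cycleFactorsFinset = t.image (fun i => σ.cycleOf (ρ i)) := by
    ext c
    constructor
    · intro hc
      obtain ⟨y, hy⟩ := IsCycle.nonempty_support (mem_cycleFactorsFinset_iff.mp hc).1
      have hys : y ∈ σ.support := mem_cycleFactorsFinset_support_le hc hy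
      obtain ⟨i, hi, hsc⟩ := h3 y hys
      rw [Finset.mem_image]
      refine ⟨i, hi, ?_⟩
      rw [hsc.cycleOf_eq, ← cycle_is_cycleOf hy hc]
    · intro hc
      obtain ⟨i, hi, rfl⟩ := Finset.mem_image.mp hc
      exact cycleOf_mem_cycleFactorsFinset_iff.mpr (h1 i hi)
  rw [cycleType_def, hfact, Finset.image_val_of_injOn hinj, Multiset.map_map,
    multiset_map_eq_sum]
  rfl

lemma odd_cancel {l : ℕ} {z w : ℤ} (hw : Odd w) (h : (2^l:ℤ) ∣ z * w) : (2^l:ℤ) ∣ z := by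
  induction l generalizing z with
  | zero => simp
  | succ l ih =>
    have h2 : (2:ℤ) ∣ z * w := dvd_trans (by simpa using pow_dvd_pow (2:ℤ) (Nat.one_le_iff_ne_zero.mpr (by omega))) h
    have hz : Even z := by
      rcases Int.even_or_odd z with h' | h'
      · exact h'
      · exfalso
        have := (h'.mul hw)
        rw [Int.odd_iff] at this
        omega
    obtain ⟨z', rfl⟩ := hz
    have : (2:ℤ)^l ∣ z' * w := by
      have := h
      rw [show ((2:ℤ)^(l+1)) = 2 * 2^l from by ring, show (z' + z') * w = 2 * (z' * w) from by ring] at this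
      exact (mul_dvd_mul_iff_left (by norm_num : (2:ℤ) ≠ 0)).mp this
    obtain ⟨c, hc⟩ := ih this
    exact ⟨c, by rw [pow_succ]; rw [hc]; ring⟩

section Bridge
variable (m r : ℕ)

/-- cast bridge -/
lemma cast_eq_iff (s t : ℤ) (k : ℕ) :
    ((3 : ZMod (2^m))^r)^k * ((s : ℤ) : ZMod (2^m)) = ((t : ℤ) : ZMod (2^m)) ↔
      (2^m : ℤ) ∣ 3^(r*k) * s - t := by
  have h3 : ((3 : ZMod (2^m))^r)^k = (((3^(r*k) : ℤ)) : ZMod (2^m)) := by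
    push_cast [pow_mul]
    norm_num
  rw [h3, ← Int.cast_mul, ZMod.intCast_eq_intCast_iff]
  rw [Int.modEq_iff_dvd, ← dvd_sub_comm]
  push_cast
  rfl

end Bridge

section Bridge2
variable (m r : ℕ)

lemma cancel_pow {l : ℕ} (hl : l ≤ m) (A B : ℤ) :
    ((2^m:ℤ) ∣ 2^(m-l)*A - 2^(m-l)*B) ↔ (2^l:ℤ) ∣ A - B := by
  have h1 : (2:ℤ)^m = 2^(m-l) * 2^l := by rw [← pow_add]; congr 1; omega
  rw [h1, show (2:ℤ)^(m-l)*A - 2^(m-l)*B = 2^(m-l) * (A - B) from by ring]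
  exact mul_dvd_mul_iff_left (by positivity : ((2:ℤ)^(m-l)) ≠ 0)

lemma map_iff {l : ℕ} (hlm : l ≤ m) (w w' : ℤ) (k : ℕ) :
    ((3 : ZMod (2^m))^r)^k * ((2^(m-l) * w : ℤ) : ZMod (2^m)) = ((2^(m-l) * w' : ℤ) : ZMod (2^m))
      ↔ (2^l:ℤ) ∣ 3^(r*k) * w - w' := by
  rw [cast_eq_iff]
  rw [show (3:ℤ)^(r*k) * (2^(m-l) * w) - 2^(m-l) * w' = 2^(m-l) * (3^(r*k) * w) - 2^(m-l) * w' from by ring]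
  exact cancel_pow m hlm _ _

lemma fix_iff {l : ℕ} (hlm : l ≤ m) {w : ℤ} (hw : Odd w) (k : ℕ) :
    ((3 : ZMod (2^m))^r)^k * ((2^(m-l) * w : ℤ) : ZMod (2^m)) = ((2^(m-l) * w : ℤ) : ZMod (2^m))
      ↔ (2^l:ℤ) ∣ 3^(r*k) - 1 := by
  rw [map_iff m r hlm]
  constructor
  · intro h
    exact odd_cancel hw (by rw [show ((3:ℤ)^(r*k) - 1) * w = 3^(r*k) * w - w from by ring]; exact h)
  · intro h
    have := Dvd.dvd.mul_right h w
    rwa [show ((3:ℤ)^(r*k) - 1) * w = 3^(r*k) * w - w from by ring] at this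

lemma sigma_pow (h : Nat.Coprime (3^r) (2^m)) (k : ℕ) (x : ZMod (2^m)) :
    ((MulAction.toPerm (ZMod.unitOfCoprime (3^r) h : (ZMod (2^m))ˣ) :
      Equiv.Perm (ZMod (2^m)))^k) x = ((3 : ZMod (2^m))^r)^k * x := by
  induction k generalizing x with
  | zero => simp
  | succ k ih =>
    rw [pow_succ, Equiv.Perm.mul_apply]
    have h1 : (MulAction.toPerm (ZMod.unitOfCoprime (3^r) h : (ZMod (2^m))ˣ) :
        Equiv.Perm (ZMod (2^m))) x = (3 : ZMod (2^m))^r * x := by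
      rw [MulAction.toPerm_apply, Units.smul_def, ZMod.coe_unitOfCoprime]
      push_cast [smul_eq_mul]
      try ring
    rw [h1, ih, pow_succ]
    ring

end Bridge2

lemma fixed_card (m r : ℕ) (hm : 3 ≤ m) (hr : Odd r) :
    Nat.card {x : ZMod (2 ^ m) | (3 : ZMod (2 ^ m)) ^ r * x = x} = 2 := by
  have hmlt : (2:ℕ)^(m-1) < 2^m := Nat.pow_lt_pow_right (by norm_num) (by omega)
  set c2 : ZMod (2^m) := ((2^(m-1) : ℕ) : ZMod (2^m)) with hc2
  obtain ⟨c, hc⟩ := three_pow_odd_mod4 hr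
  have key : ∀ x : ZMod (2^m), (3 : ZMod (2^m))^r * x = x ↔ (2:ℕ)^(m-1) ∣ x.val := by
    intro x
    have hx : (((x.val : ℕ) : ℤ) : ZMod (2^m)) = x := by
      push_cast
      exact ZMod.natCast_rightInverse x
    have h1 : (3 : ZMod (2^m))^r * x = x ↔ (2^m : ℤ) ∣ 3^(r*1) * (x.val : ℤ) - (x.val : ℤ) := by
      rw [← cast_eq_iff m r (x.val : ℤ) (x.val : ℤ) 1, pow_one, hx]
    rw [h1]
    have h2 : (3:ℤ)^(r*1) * (x.val:ℤ) - (x.val:ℤ) = (2 * (x.val:ℤ)) * (2*c+1) := by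
      rw [mul_one]
      rw [show (3:ℤ)^r = 4*c+3 from by omega]
      ring
    rw [h2]
    constructor
    · intro h
      have h3 : (2:ℤ)^m ∣ 2 * (x.val:ℤ) := odd_cancel ⟨c, by ring⟩ h
      have h4 : (2:ℤ)^m = 2 * 2^(m-1) := by
        rw [← pow_succ']; congr 1; omega
      rw [h4] at h3
      have h5 : (2:ℤ)^(m-1) ∣ (x.val : ℤ) :=
        (mul_dvd_mul_iff_left (by norm_num : (2:ℤ) ≠ 0)).mp h3
      exact_mod_cast (by push_cast at h5 ⊢; exact h5 : ((2^(m-1) : ℕ) : ℤ) ∣ ((x.val : ℕ) : ℤ)) |> Int.ofNat_dvd.mp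
    · rintro ⟨q, hq⟩
      refine Dvd.dvd.mul_right ?_ _
      refine ⟨q, ?_⟩
      have : (x.val : ℤ) = 2^(m-1) * q := by exact_mod_cast hq
      rw [this, show ((2:ℤ)^m) = 2 * 2^(m-1) from by rw [← pow_succ']; congr 1; omega]
      ring
  have hSeq : {x : ZMod (2 ^ m) | (3 : ZMod (2 ^ m)) ^ r * x = x} = {0, c2} := by
    ext x
    simp only [Set.mem_setOf_eq, Set.mem_insert_iff, Set.mem_singleton_iff, key]
    constructor
    · rintro ⟨q, hq⟩
      have hq2 : q < 2 := by
        by_contra hq2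
        push_neg at hq2
        have : 2^m ≤ x.val := by
          calc (2:ℕ)^m = 2^(m-1) * 2 := by rw [← pow_succ]; congr 1; omega
          _ ≤ 2^(m-1) * q := by exact Nat.mul_le_mul_left _ hq2
          _ = x.val := hq.symm
        exact absurd (ZMod.val_lt x) (by omega)
      interval_cases q
      · left
        rw [← ZMod.val_eq_zero]; omega
      · right
        have : x.val = 2^(m-1) := by omega
        rw [← ZMod.natCast_rightInverse x, this]
    · rintro (rfl | rfl)
      · exact ⟨0, by simp⟩
      · exact ⟨1, by rw [hc2, ZMod.val_cast_of_lt hmlt]; ring⟩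
  rw [Nat.card_coe_set_eq, hSeq]
  refine Set.ncard_pair ?_
  intro h0
  have : c2 = 0 := h0.symm
  rw [hc2, ZMod.natCast_eq_zero_iff] at this
  exact absurd (Nat.le_of_dvd (by positivity) this) (by omega)

lemma rep2_multiset (c : ℕ) : ({c} : Multiset ℕ) + {c} = Multiset.replicate 2 c := by
  rw [Multiset.singleton_add]
  rfl

open Equiv Equiv.Perm Finset in
lemma cycleType_main (m r : ℕ) (hm : 3 ≤ m) (hr : Odd r) (h : Nat.Coprime (3^r) (2^m)) :
    Equiv.Perm.cycleType
        (MulAction.toPerm (ZMod.unitOfCoprime (3 ^ r) h : (ZMod (2 ^ m))ˣ) :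
          Equiv.Perm (ZMod (2 ^ m)))
      = {2} + ∑ l ∈ Finset.Icc 3 m, Multiset.replicate 2 (2 ^ (l - 2)) := by
  classical
  set σ : Equiv.Perm (ZMod (2^m)) :=
    (MulAction.toPerm (ZMod.unitOfCoprime (3 ^ r) h : (ZMod (2 ^ m))ˣ)) with hσdef
  set ρ : ℕ × ℕ → ZMod (2^m) := fun p => ((2^(m-p.1) * (-1)^p.2 : ℤ) : ZMod (2^m)) with hρ
  set t : Finset (ℕ × ℕ) := insert (2,0) ((Finset.Icc 3 m) ×ˢ ({0,1} : Finset ℕ)) with ht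
  have hmem : ∀ p : ℕ × ℕ, p ∈ t ↔ (p = (2,0) ∨ (3 ≤ p.1 ∧ p.1 ≤ m ∧ (p.2 = 0 ∨ p.2 = 1))) := by
    intro p
    rw [ht, Finset.mem_insert, Finset.mem_product, Finset.mem_Icc]
    simp only [Finset.mem_insert, Finset.mem_singleton]
    tauto
  have hlt : ∀ p : ℕ × ℕ, p ∈ t → 2 ≤ p.1 ∧ p.1 ≤ m := by
    intro p hp
    rcases (hmem p).mp hp with rfl | ⟨h3, hmle, _⟩
    · exact ⟨le_refl 2, by omega⟩
    · exact ⟨by omega, hmle⟩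
  have hOdd : ∀ e : ℕ, Odd ((-1:ℤ)^e) := fun e => Odd.pow ⟨-1, by ring⟩
  have hrpos : 0 < r := by rcases hr with ⟨s, hs⟩; omega
  have hcop2r : Nat.Coprime 2 r :=
    (Nat.Prime.coprime_iff_not_dvd Nat.prime_two).mpr (by rw [Nat.odd_iff] at hr; omega)
  have hsp : ∀ (k : ℕ) (x : ZMod (2^m)), (σ^k) x = ((3 : ZMod (2^m))^r)^k * x :=
    fun k x => sigma_pow m r h k x
  have hfix : ∀ p : ℕ × ℕ, p.1 ≤ m → ∀ k : ℕ,
      ((σ^k) (ρ p) = ρ p ↔ (2^p.1 : ℤ) ∣ 3^(r*k) - 1) := by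
    intro p hpm k
    rw [hsp, hρ]
    exact fix_iff m r hpm (hOdd p.2) k
  -- membership in support
  have h1 : ∀ p ∈ t, ρ p ∈ σ.support := by
    intro p hp
    rw [Equiv.Perm.mem_support]
    intro hfixed
    have hdvd := (hfix p (hlt p hp).2 1).mp (by rw [pow_one]; exact hfixed)
    have h4 : (4:ℤ) ∣ 3^(r*1) - 1 := by
      refine dvd_trans ?_ hdvd
      have := pow_dvd_pow (2:ℤ) (hlt p hp).1
      simpa using this
    rw [mul_one] at h4
    have := (dvd_four_three_pow_sub_one r).mp h4
    rw [Nat.odd_iff] at hr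
    omega
  -- cycle lengths
  have hlen : ∀ p ∈ t, (σ.cycleOf (ρ p)).support.card
      = (if p.1 = 2 then 2 else 2^(p.1 - 2)) := by
    intro p hp
    obtain ⟨hp2, hpm⟩ := hlt p hp
    have hne : σ (ρ p) ≠ ρ p := Equiv.Perm.mem_support.mp (h1 p hp)
    set c : Equiv.Perm (ZMod (2^m)) := σ.cycleOf (ρ p) with hc
    have hcyc : c.IsCycle := Equiv.Perm.isCycle_cycleOf σ hne
    have hpow : ∀ k : ℕ, (c^k) (ρ p) = (σ^k) (ρ p) :=
      fun k => Equiv.Perm.cycleOf_pow_apply_self σ (ρ p) k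
    have hcne : c (ρ p) ≠ ρ p := by
      rw [hc, Equiv.Perm.cycleOf_apply_self]; exact hne
    set d : ℕ := if p.1 = 2 then 2 else 2^(p.1 - 2) with hd
    have h3le : p.1 ≠ 2 → 3 ≤ p.1 := by
      intro h2
      rcases (hmem p).mp hp with rfl | ⟨h3, _, _⟩
      · simp at h2
      · exact h3
    have hcd : c ^ d = 1 := by
      refine (hcyc.pow_eq_one_iff' hcne).mpr ?_
      rw [hpow]
      refine (hfix p hpm d).mpr ?_
      rw [hd]
      by_cases h2 : p.1 = 2
      · simp only [h2, if_true]
        have h4 : (4:ℤ) ∣ 3^(r*2) - 1 := (dvd_four_three_pow_sub_one (r*2)).mpr ⟨r, by ring⟩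
        norm_num
        exact h4
      · simp only [h2, if_false]
        exact (dvd_three_pow_sub_one (h3le h2) (r * 2^(p.1-2))).mpr (dvd_mul_left _ _)
    have hdvd1 : orderOf c ∣ d := orderOf_dvd_of_pow_eq_one hcd
    have hfixo : (σ^(orderOf c)) (ρ p) = ρ p := by
      rw [← hpow, pow_orderOf_eq_one, Equiv.Perm.one_apply]
    have hdiv := (hfix p hpm (orderOf c)).mp hfixo
    have hdvd2 : d ∣ orderOf c := by
      rw [hd]
      by_cases h2 : p.1 = 2
      · simp only [h2, if_true]
        rw [h2] at hdiv
        have h4 : (4:ℤ) ∣ 3^(r * orderOf c) - 1 := by norm_num at hdiv; exact hdiv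
        exact hcop2r.dvd_of_dvd_mul_left ((dvd_four_three_pow_sub_one _).mp h4)
      · simp only [h2, if_false]
        have := (dvd_three_pow_sub_one (h3le h2) (r * orderOf c)).mp hdiv
        exact (Nat.Coprime.pow_left _ hcop2r).dvd_of_dvd_mul_left this
    have hord : orderOf c = d := Nat.dvd_antisymm hdvd1 hdvd2
    rw [← hcyc.orderOf, hord]
  -- distinctness of cycles
  have hgen : ∀ (p q : ℕ × ℕ) (k : ℕ),
      ((σ^k) (ρ p) = ρ q ↔ (2^m : ℤ) ∣ 3^(r*k) * (2^(m-p.1) * (-1)^p.2) - 2^(m-q.1) * (-1)^q.2) := by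
    intro p q k
    rw [hsp, hρ]
    exact cast_eq_iff m r _ _ k
  have hdifflevel : ∀ (p q : ℕ × ℕ), p.1 < q.1 → q.1 ≤ m → ∀ k : ℕ, (σ^k) (ρ p) ≠ ρ q := by
    intro p q hlt' hqm k hk
    have hdvd := (hgen p q k).mp hk
    have hsplit : (3:ℤ)^(r*k) * (2^(m-p.1) * (-1)^p.2) - 2^(m-q.1) * (-1)^q.2
        = 2^(m-q.1) * (3^(r*k) * 2^(q.1-p.1) * (-1)^p.2) - 2^(m-q.1) * ((-1)^q.2) := by
      rw [show (2:ℤ)^(m-p.1) = 2^(m-q.1) * 2^(q.1-p.1) from by rw [← pow_add]; congr 1; omega]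
      ring
    rw [hsplit, cancel_pow m hqm] at hdvd
    have h2d : (2:ℤ) ∣ 3^(r*k) * 2^(q.1-p.1) * (-1)^p.2 - (-1)^q.2 :=
      dvd_trans (by simpa using pow_dvd_pow (2:ℤ) (show 1 ≤ q.1 from by omega)) hdvd
    have heven : Even ((3:ℤ)^(r*k) * 2^(q.1-p.1) * (-1)^p.2) := by
      have hc2 : (2:ℤ)^(q.1-p.1) = 2 * 2^(q.1-p.1-1) := by
        rw [← pow_succ']
        congr 1
        omega
      exact ⟨3^(r*k) * 2^(q.1-p.1-1) * (-1)^p.2, by rw [hc2]; ring⟩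
    have hodd : Odd ((3:ℤ)^(r*k) * 2^(q.1-p.1) * (-1)^p.2 - (-1)^q.2) :=
      Even.sub_odd heven (hOdd q.2)
    rw [Int.odd_iff] at hodd
    omega
  have h2 : ∀ p ∈ t, ∀ q ∈ t, p ≠ q → ¬ σ.SameCycle (ρ p) (ρ q) := by
    intro p hp q hq hpq hsc
    rcases Nat.lt_trichotomy p.1 q.1 with hlt' | heq | hgt
    · obtain ⟨k, -, hk⟩ := hsc.exists_pow_eq'
      exact hdifflevel p q hlt' (hlt q hq).2 k hk
    · -- same level: p.2 ≠ q.2, both at level ≥ 3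
      have hne2 : p.2 ≠ q.2 := by
        intro he
        exact hpq (Prod.ext heq he)
      have h3l : 3 ≤ p.1 := by
        rcases (hmem p).mp hp with rfl | ⟨h3, _, _⟩ <;>
          rcases (hmem q).mp hq with rfl | ⟨h3', _, _⟩
        · exact absurd rfl hpq
        · omega
        · omega
        · omega
      obtain ⟨k, -, hk⟩ := hsc.exists_pow_eq'
      have hdvd := (hgen p q k).mp hk
      rw [← heq] at hdvd
      have hsplit : (3:ℤ)^(r*k) * (2^(m-p.1) * (-1)^p.2) - 2^(m-p.1) * (-1)^q.2
          = 2^(m-p.1) * (3^(r*k) * (-1)^p.2) - 2^(m-p.1) * ((-1)^q.2) := by ring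
      rw [hsplit, cancel_pow m (hlt p hp).2] at hdvd
      have hepq : (p.2 = 0 ∧ q.2 = 1) ∨ (p.2 = 1 ∧ q.2 = 0) := by
        rcases (hmem p).mp hp with rfl | ⟨-, -, hP⟩
        · omega
        · rcases (hmem q).mp hq with rfl | ⟨-, -, hQ⟩
          · omega
          · rcases hP with h|h <;> rcases hQ with h'|h' <;> omega
      have habs : (2^p.1 : ℤ) ∣ 3^(r*k) + 1 := by
        rcases hepq with ⟨he1, he2⟩ | ⟨he1, he2⟩
        · rw [he1, he2] at hdvd
          simpa using hdvd
        · rw [he1, he2] at hdvd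
          rw [show (3:ℤ)^(r*k) * (-1)^1 - (-1)^0 = -(3^(r*k) + 1) from by ring] at hdvd
          exact (dvd_neg.mp hdvd)
      exact not_dvd_three_pow_add_one h3l (r*k) habs
    · obtain ⟨k, -, hk⟩ := hsc.symm.exists_pow_eq'
      exact hdifflevel q p hgt (hlt p hp).2 k hk
  -- covering
  have h3 : ∀ y ∈ σ.support, ∃ p ∈ t, σ.SameCycle (ρ p) y := by
    intro y hy
    have hyne : σ y ≠ y := Equiv.Perm.mem_support.mp hy
    have hy0 : y ≠ 0 := by
      rintro rfl
      apply hyne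
      have := hsp 1 0
      rw [pow_one] at this
      rw [this, mul_zero]
    have hv0 : y.val ≠ 0 := by rwa [Ne, ZMod.val_eq_zero]
    obtain ⟨e, w, hw2, hvaleq⟩ := Nat.exists_eq_pow_mul_and_not_dvd hv0 2 (by norm_num)
    have hwodd : Odd w := Nat.odd_iff.mpr (by omega)
    have hwpos : 0 < w := Nat.pos_of_ne_zero (by rintro rfl; exact hw2 ⟨0, rfl⟩)
    have hem : e < m := by
      have h1' : 2^e ≤ y.val := by rw [hvaleq]; exact Nat.le_mul_of_pos_right _ hwpos
      have h2' : y.val < 2^m := ZMod.val_lt y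
      by_contra hem'
      push_neg at hem'
      have := Nat.pow_le_pow_right (show 0 < 2 from by norm_num) hem'
      omega
    set l : ℕ := m - e with hldef
    have hl1 : 1 ≤ l := by omega
    have hlm : l ≤ m := by omega
    have hecast : y = ((2^(m-l) * (w:ℤ) : ℤ) : ZMod (2^m)) := by
      rw [show m - l = e from by omega]
      have : y = ((y.val : ℕ) : ZMod (2^m)) := (ZMod.natCast_rightInverse y).symm
      rw [this, hvaleq]
      push_cast
      ring
    -- l = 1 impossible
    rcases eq_or_lt_of_le hl1 with hl1' | hl2
    · exfalso
      have hw1 : w = 1 := by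
        have h2' : y.val < 2^m := ZMod.val_lt y
        rw [hvaleq] at h2'
        have : 2^e * w < 2^e * 2 := by
          rw [show (2:ℕ)^e * 2 = 2^(e+1) from by rw [pow_succ]]
          have : e + 1 = m := by omega
          rw [this]; exact h2'
        have := Nat.lt_of_mul_lt_mul_left this
        omega
      apply hyne
      have hecast1 : y = ((2^(m-l) * (1:ℤ) : ℤ) : ZMod (2^m)) := by
        rw [hecast, hw1]; norm_num
      rw [show σ y = (σ^1) y from by rw [pow_one], hsp]
      nth_rewrite 1 [hecast1]
      rw [hecast1]
      refine (fix_iff m r hlm odd_one 1).mpr ?_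
      rcases hr with ⟨s, hs⟩
      have := three_pow_odd_mod4 (⟨s, hs⟩ : Odd r)
      rw [show l = 1 from by omega]
      norm_num
      omega
    · -- l ≥ 2
      have hsc_of : ∀ (p : ℕ × ℕ) (k : ℕ), (σ^k) (ρ p) = y → σ.SameCycle (ρ p) y := by
        intro p k hk
        exact ⟨(k : ℤ), by rw [zpow_natCast]; exact hk⟩
      rcases eq_or_lt_of_le (show 2 ≤ l from hl2) with hl2' | hl3
      · -- l = 2
        refine ⟨(2,0), by rw [hmem]; left; rfl, ?_⟩
        have hw4 : w % 4 = 1 ∨ w % 4 = 3 := by omega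
        have hmap : ∀ k : ℕ, ((σ^k) (ρ (2,0)) = y ↔ (2^2:ℤ) ∣ 3^(r*k) * (-1:ℤ)^(0:ℕ) - w) := by
          intro k
          rw [hsp, hρ, hecast, show l = 2 from by omega]
          exact map_iff m r (by omega) _ _ k
        rcases hw4 with hw4 | hw4
        · refine hsc_of (2,0) 0 ((hmap 0).mpr ?_)
          norm_num
          refine ⟨(1 - (w:ℤ))/4, ?_⟩
          have : (w:ℤ) % 4 = 1 := by omega
          omega
        · refine hsc_of (2,0) 1 ((hmap 1).mpr ?_)
          rcases hr with ⟨s, hs⟩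
          have h43 := three_pow_odd_mod4 (⟨s, hs⟩ : Odd r)
          norm_num
          have : (w:ℤ) % 4 = 3 := by omega
          omega
      · -- l ≥ 3
        obtain ⟨j, hj⟩ := exists_three_pow_mod (show 3 ≤ l from hl3) (Odd.natCast hwodd)
        -- find k with r * k ≡ j mod 2^(l-2) and r*k ≥ j
        set φ : ℕ := Nat.totient (2^(l-2)) with hφdef
        have hφpos : 0 < φ := Nat.totient_pos.mpr (pow_pos (by norm_num) _)
        have hcopl : Nat.Coprime r (2^(l-2)) :=
          Nat.Coprime.pow_right _ (Nat.coprime_comm.mp hcop2r)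
        set k : ℕ := j * r^(φ-1) with hkdef
        have hrk : r * k = j * r^φ := by
          have h' : r * k = j * (r^(φ-1) * r) := by rw [hkdef]; ring
          rw [h', ← pow_succ, show φ-1+1 = φ from by omega]
        have hrk_ge : j ≤ r * k := by
          rw [hrk]
          calc j = j * 1 := by ring
          _ ≤ j * r^φ := Nat.mul_le_mul_left _ (Nat.one_le_pow _ _ (by omega))
        have hmodeq : (2:ℕ)^(l-2) ∣ r * k - j := by
          have h1' : (2:ℕ)^(l-2) ∣ r^φ - 1 := by
            have := (Nat.ModEq.pow_totient hcopl).symm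
            exact (Nat.modEq_iff_dvd' (Nat.one_le_pow _ _ (by omega))).mp this
          obtain ⟨c, hc⟩ := h1'
          refine ⟨j * c, ?_⟩
          rw [hrk]
          have h2' : r^φ = 2^(l-2) * c + 1 := by
            have : 1 ≤ r^φ := Nat.one_le_pow _ _ (by omega)
            omega
          rw [h2', Nat.mul_add, Nat.mul_one, Nat.add_sub_cancel, ← Nat.mul_assoc,
            Nat.mul_comm j (2^(l-2)), Nat.mul_assoc]
        have hpowdvd : (2^l : ℤ) ∣ 3^(r*k) - 3^j := by
          have h1' : (2^l : ℤ) ∣ 3^(r*k - j) - 1 :=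
            (dvd_three_pow_sub_one hl3 _).mpr hmodeq
          have h2' : (3:ℤ)^(r*k) - 3^j = 3^j * (3^(r*k-j) - 1) := by
            rw [mul_sub, mul_one, ← pow_add]
            congr 2
            omega
          rw [h2']
          exact Dvd.dvd.mul_left h1' _
        have hmap : ∀ (ee : ℕ) (kk : ℕ), ((σ^kk) (ρ (l,ee)) = y ↔ (2^l:ℤ) ∣ 3^(r*kk) * (-1:ℤ)^ee - w) := by
          intro ee kk
          rw [hsp, hρ, hecast]
          exact map_iff m r hlm _ _ kk
        rcases hj with hj | hj
        · refine ⟨(l, 0), by rw [hmem]; right; exact ⟨hl3, hlm, Or.inl rfl⟩, ?_⟩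
          refine hsc_of (l,0) k ((hmap 0 k).mpr ?_)
          rw [pow_zero, mul_one]
          have : (3:ℤ)^(r*k) - w = (3^(r*k) - 3^j) + (3^j - w) := by ring
          rw [this]
          exact dvd_add hpowdvd hj
        · refine ⟨(l, 1), by rw [hmem]; right; exact ⟨hl3, hlm, Or.inr rfl⟩, ?_⟩
          refine hsc_of (l,1) k ((hmap 1 k).mpr ?_)
          rw [pow_one]
          have : (3:ℤ)^(r*k) * (-1) - w = -((3^(r*k) - 3^j) + (3^j + w)) := by ring
          rw [this]
          exact Dvd.dvd.neg_right (dvd_add hpowdvd hj)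
  -- conclude
  rw [cycleType_eq_sum_reps σ t ρ h1 h2 h3]
  rw [Finset.sum_congr rfl (fun p hp => by rw [hlen p hp])]
  rw [ht, Finset.sum_insert (by simp [Finset.mem_product])]
  simp only [if_pos rfl]
  congr 1
  rw [Finset.sum_product]
  refine Finset.sum_congr rfl ?_
  intro l hl
  rw [Finset.mem_Icc] at hl
  rw [show ({0,1} : Finset ℕ) = insert 0 {1} from rfl, Finset.sum_insert (by simp),
    Finset.sum_singleton]
  rw [if_neg (by omega), rep2_multiset]

/-- Let `m ≥ 3` and `r` odd. The permutation `π_a` of `ℤ_{2^m}`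
given by multiplication by `a = 3^r` has cycle type
`x_1^2 · x_2 · Π_{l=3}^{m} x_{2^(l−2)}^2`: it has exactly `2` fixed points, one
`2`-cycle, and for each `3 ≤ l ≤ m` exactly two cycles of length `2^(l−2)`
(the cycle type multiset records the nontrivial cycle lengths). -/
theorem cycle_type_three_pow_odd (m r : ℕ) (hm : 3 ≤ m) (hr : Odd r) :
    Nat.card {x : ZMod (2 ^ m) | (3 : ZMod (2 ^ m)) ^ r * x = x} = 2 ∧
    Equiv.Perm.cycleType
        (MulAction.toPerm
          (ZMod.unitOfCoprime (3 ^ r) (Nat.Coprime.pow r m (by norm_num)) :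
            (ZMod (2 ^ m))ˣ) :
          Equiv.Perm (ZMod (2 ^ m)))
      = {2} + ∑ l ∈ Finset.Icc 3 m, Multiset.replicate 2 (2 ^ (l - 2)) := by
  exact ⟨fixed_card m r hm hr, cycleType_main m r hm hr _⟩
end

section
/- Let m ≥ 3 be an integer, let s be an integer with 1 ≤ s ≤ m − 3, and let r be an odd natural number. Then the permutation π_a of Z_{2^m} given by multiplication by a = 3^{2^s · r} has cycle type x_1^{2^{s+2}} · Π_{l=s+3}^{m} x_{2^{l−2−s}}^{2^{s+1}}; that is, it has exactly 2^{s+2} fixed points, and for each l with s+3 ≤ l ≤ m exactly 2^{s+1} cycles of length 2^{l−2−s}. -/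
open Equiv Finset

/-- LTE-style lemma: `3^(2^(t+1) * r) = 2^(t+3) * u + 1` with `u` odd. -/
lemma pow81 (k : ℕ) : ∃ w, (81 : ℕ) ^ k = 16 * w + 1 := by
  induction k with
  | zero => exact ⟨0, rfl⟩
  | succ k ih =>
    obtain ⟨w, hw⟩ := ih
    exact ⟨81 * w + 5, by rw [pow_succ, hw]; ring⟩

lemma three_pow_key (r : ℕ) (hr : Odd r) (t : ℕ) :
    ∃ u, Odd u ∧ (3 : ℕ) ^ (2 ^ (t + 1) * r) = 2 ^ (t + 3) * u + 1 := by
  induction t with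
  | zero =>
    obtain ⟨k, rfl⟩ := hr
    obtain ⟨w, hw⟩ := pow81 k
    refine ⟨18 * w + 1, ⟨9 * w, by ring⟩, ?_⟩
    have : (3:ℕ) ^ (2 ^ 1 * (2 * k + 1)) = 9 * 81 ^ k := by
      rw [show 2 ^ 1 * (2 * k + 1) = 4 * k + 2 by ring, pow_add, pow_mul]
      norm_num
      ring
    rw [this, hw]; ring
  | succ t ih =>
    obtain ⟨u, hu, h⟩ := ih
    refine ⟨u * (2 ^ (t + 2) * u + 1), ?_, ?_⟩
    · exact hu.mul (Even.add_one ⟨2 ^ (t + 1) * u, by ring⟩)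
    · have he : 2 ^ (t + 2) * r = 2 ^ (t + 1) * r * 2 := by ring
      rw [he, pow_mul, h]; ring

/-- Cardinality of the kernel of multiplication by `2^v` on `ZMod (2^m)`. -/
lemma card_dvd_val (N d q : ℕ) (hN : 0 < N) (hd : 0 < d) (hq : d * q = N) :
    Nat.card {x : ZMod N | d ∣ x.val} = q := by
  have : NeZero N := ⟨hN.ne'⟩
  rw [Nat.card_eq_fintype_card, Fintype.card_subtype]
  rw [show (Finset.univ.filter fun x : ZMod N => x ∈ {x : ZMod N | d ∣ x.val}).card
      = (Finset.univ.filter fun x : ZMod N => d ∣ x.val).card from by simp [Set.mem_setOf_eq]]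
  rw [← Finset.card_range q]
  refine Finset.card_bij' (fun x _ => x.val / d) (fun k _ => ((d * k : ℕ) : ZMod N))
    ?_ ?_ ?_ ?_
  · intro x hx
    simp only [Finset.mem_filter] at hx
    have hlt : x.val < N := ZMod.val_lt x
    exact Finset.mem_range.2 (Nat.div_lt_of_lt_mul (hq ▸ hlt))
  · intro k hk
    simp only [Finset.mem_range] at hk
    have hlt : d * k < N := hq ▸ (Nat.mul_lt_mul_left hd).2 hk
    simp only [Finset.mem_filter, Finset.mem_univ, true_and]
    rw [ZMod.val_cast_of_lt hlt]
    exact Dvd.intro k rfl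
  · intro x hx
    simp only [Finset.mem_filter] at hx
    show ((d * (x.val / d) : ℕ) : ZMod N) = x
    rw [Nat.mul_div_cancel' hx.2]
    exact ZMod.natCast_rightInverse x
  · intro k hk
    simp only [Finset.mem_range] at hk
    have hlt : d * k < N := hq ▸ (Nat.mul_lt_mul_left hd).2 hk
    show ((d * k : ℕ) : ZMod N).val / d = k
    rw [ZMod.val_cast_of_lt hlt, Nat.mul_div_cancel_left k hd]

lemma card_ker_two_pow (m v : ℕ) :
    Nat.card {x : ZMod (2 ^ m) | (2 : ZMod (2 ^ m)) ^ v * x = 0} = 2 ^ (min v m) := by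
  have hNZ : NeZero ((2:ℕ) ^ m) := ⟨by positivity⟩
  rcases le_or_gt m v with h | h
  · have h0 : (2 : ZMod (2 ^ m)) ^ v = 0 := by
      have : (((2:ℕ) ^ v : ℕ) : ZMod (2 ^ m)) = 0 :=
        (ZMod.natCast_eq_zero_iff _ _).2 (pow_dvd_pow 2 h)
      push_cast at this
      exact this
    have : {x : ZMod (2 ^ m) | (2 : ZMod (2 ^ m)) ^ v * x = 0} = Set.univ := by
      ext x; simp [h0]
    rw [this, min_eq_right h, Nat.card_congr (Equiv.Set.univ _)]
    exact Nat.card_zmod (2 ^ m)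
  · have hset : {x : ZMod (2 ^ m) | (2 : ZMod (2 ^ m)) ^ v * x = 0}
        = {x : ZMod (2 ^ m) | 2 ^ (m - v) ∣ x.val} := by
      ext x
      simp only [Set.mem_setOf_eq]
      have hx : ((x.val : ℕ) : ZMod (2 ^ m)) = x := ZMod.natCast_rightInverse x
      have hcast : (((2 ^ v * x.val : ℕ)) : ZMod (2 ^ m)) = (2 : ZMod (2 ^ m)) ^ v * x := by
        push_cast [hx]; ring
      rw [← hcast, ZMod.natCast_eq_zero_iff]
      constructor
      · intro hdvd
        have h2 : 2 ^ v * 2 ^ (m - v) ∣ 2 ^ v * x.val := by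
          rw [← pow_add, show v + (m - v) = m by omega]; exact hdvd
        exact (Nat.mul_dvd_mul_iff_left (pow_pos two_pos v)).1 h2
      · intro hdvd
        have hm : (2:ℕ) ^ m = 2 ^ v * 2 ^ (m - v) := by
          rw [← pow_add]; congr 1; omega
        have h2 := mul_dvd_mul_left ((2:ℕ) ^ v) hdvd
        rwa [← hm] at h2
    rw [hset, min_eq_left h.le]
    exact card_dvd_val _ _ _ (pow_pos two_pos _) (pow_pos two_pos _)
      (by rw [← pow_add]; congr 1; omega)

/-- Count of fixed points of multiplication by `2^v * u + 1` with `u` odd. -/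
lemma card_fixed_mul (m v u : ℕ) (hu : Odd u) (b : ZMod (2 ^ m))
    (hb : b = 2 ^ v * (u : ZMod (2 ^ m)) + 1) :
    Nat.card {x : ZMod (2 ^ m) | b * x = x} = 2 ^ (min v m) := by
  have hunit : IsUnit ((u : ℕ) : ZMod (2 ^ m)) :=
    (ZMod.isUnit_iff_coprime u (2 ^ m)).2 (Nat.Coprime.pow_right m hu.coprime_two_right)
  have hset : {x : ZMod (2 ^ m) | b * x = x}
      = {x : ZMod (2 ^ m) | (2 : ZMod (2 ^ m)) ^ v * x = 0} := by
    ext x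
    simp only [Set.mem_setOf_eq, hb]
    rw [add_mul, one_mul, add_eq_right,
      show (2 : ZMod (2 ^ m)) ^ v * (u : ZMod (2 ^ m)) * x
          = (u : ZMod (2 ^ m)) * ((2 : ZMod (2 ^ m)) ^ v * x) by ring,
      hunit.mul_right_eq_zero]
  rw [hset]
  exact card_ker_two_pow m v

/-- Sum of powers of two over an interval. -/
lemma sum_range_two_pow (n : ℕ) : ∑ i ∈ Finset.range n, 2 ^ i = 2 ^ n - 1 := by
  induction n with
  | zero => simp
  | succ n ih =>
    rw [Finset.sum_range_succ, ih, pow_succ]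
    have := Nat.one_le_two_pow (n := n)
    omega

lemma sum_Icc_two_pow (b m : ℕ) (hb : 1 ≤ b) :
    ∑ l ∈ Finset.Icc b m, 2 ^ (l - 1) = 2 ^ m - 2 ^ (b - 1) := by
  induction m with
  | zero =>
    rw [Finset.Icc_eq_empty (by omega)]
    have := Nat.one_le_two_pow (n := b - 1)
    simp; omega
  | succ m ih =>
    by_cases hbm : b ≤ m + 1
    · rw [← Finset.insert_Icc_right_eq_Icc_add_one (by omega), Finset.sum_insert (by simp)]
      rw [ih]
      have h1 : 2 ^ (b - 1) ≤ 2 ^ m := Nat.pow_le_pow_right (by norm_num) (by omega)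
      have h2 : (2:ℕ) ^ (m + 1) = 2 ^ m * 2 := pow_succ 2 m
      simp only [Nat.add_sub_cancel]
      omega
    · rw [Finset.Icc_eq_empty (by omega)]
      have : (2:ℕ) ^ (m + 1) ≤ 2 ^ (b - 1) := Nat.pow_le_pow_right (by norm_num) (by omega)
      simp; omega

/-- Key fact: support cardinality of a power in terms of cycle type. -/
lemma card_support_pow_eq {α : Type*} [Fintype α] [DecidableEq α] (σ : Equiv.Perm α) (n : ℕ) :
    ((σ ^ n).support).card = (σ.cycleType.filter (fun d => ¬ d ∣ n)).sum := by
  induction σ using Equiv.Perm.cycle_induction_on with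
  | base_one => simp
  | base_cycles σ hσ =>
    rw [hσ.cycleType]
    by_cases h : σ.support.card ∣ n
    · have h1 : σ ^ n = 1 := by
        rw [← orderOf_dvd_iff_pow_eq_one, hσ.orderOf]; exact h
      rw [h1]
      simp [Multiset.filter_singleton, h]
    · have h2 : (σ ^ n).support = σ.support :=
        hσ.support_pow_eq_iff.2 (by rwa [hσ.orderOf])
      rw [h2]
      simp [Multiset.filter_singleton, h]
  | induction_disjoint σ τ hd hc ihσ ihτ =>
    rw [hd.cycleType_mul, Multiset.filter_add, Multiset.sum_add, ← ihσ, ← ihτ,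
      hd.commute.mul_pow, (hd.pow_disjoint_pow n n).card_support_mul]

/-- Splitting the filtered sum over a multiset of powers of two. -/
lemma filter_sum_split (j : ℕ) (T : Multiset ℕ)
    (hT : ∀ x ∈ T, ∃ i, 1 ≤ i ∧ x = 2 ^ i) :
    (T.filter (fun d => ¬ d ∣ 2 ^ j)).sum
      = (T.filter (fun d => ¬ d ∣ 2 ^ (j + 1))).sum + 2 ^ (j + 1) * T.count (2 ^ (j + 1)) := by
  induction T using Multiset.induction with
  | empty => simp
  | cons a T ih =>
    obtain ⟨i, hi1, rfl⟩ := hT _ (Multiset.mem_cons_self a T)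
    have hT' : ∀ x ∈ T, ∃ i, 1 ≤ i ∧ x = 2 ^ i :=
      fun x hx => hT x (Multiset.mem_cons_of_mem hx)
    have key := ih hT'
    have hinj : ∀ i' j' : ℕ, (2:ℕ) ^ i' = 2 ^ j' → i' = j' :=
      fun i' j' h => Nat.pow_right_injective (le_refl 2) h
    by_cases h1 : i ≤ j
    · rw [Multiset.filter_cons_of_neg _ (by
        simp only [Decidable.not_not]
        exact pow_dvd_pow 2 h1),
        Multiset.filter_cons_of_neg _ (by
        simp only [Decidable.not_not]
        exact pow_dvd_pow 2 (by omega)),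
        Multiset.count_cons_of_ne (show (2:ℕ) ^ (j+1) ≠ 2 ^ i from
          fun h => by have := hinj _ _ h; omega), key]
    · by_cases h2 : i = j + 1
      · subst h2
        rw [Multiset.filter_cons_of_pos _ (by
          rw [Nat.pow_dvd_pow_iff_le_right one_lt_two]; omega),
          Multiset.filter_cons_of_neg _ (by
          simp only [Decidable.not_not]
          exact dvd_refl _),
          Multiset.count_cons_self, Multiset.sum_cons, key]
        ring
      · rw [Multiset.filter_cons_of_pos _ (by
          rw [Nat.pow_dvd_pow_iff_le_right one_lt_two]; omega),
          Multiset.filter_cons_of_pos _ (by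
          rw [Nat.pow_dvd_pow_iff_le_right one_lt_two]; omega),
          Multiset.count_cons_of_ne (show (2:ℕ) ^ (j+1) ≠ 2 ^ i from
            fun h => h2 (hinj _ _ h).symm),
          Multiset.sum_cons, Multiset.sum_cons, key]
        ring

/-- Two multisets of powers of two (exponent ≥ 1) with equal filtered sums are equal. -/
lemma multiset_eq_of_filter_sums (T M : Multiset ℕ)
    (hT : ∀ x ∈ T, ∃ i, 1 ≤ i ∧ x = 2 ^ i)
    (hM : ∀ x ∈ M, ∃ i, 1 ≤ i ∧ x = 2 ^ i)
    (h : ∀ j, (T.filter (fun d => ¬ d ∣ 2 ^ j)).sum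
        = (M.filter (fun d => ¬ d ∣ 2 ^ j)).sum) : T = M := by
  ext n
  by_cases hn : ∃ i, 1 ≤ i ∧ n = 2 ^ i
  · obtain ⟨i, hi, rfl⟩ := hn
    obtain ⟨j, rfl⟩ : ∃ j, i = j + 1 := ⟨i - 1, by omega⟩
    have h1 := filter_sum_split j T hT
    have h2 := filter_sum_split j M hM
    rw [h j, h (j + 1)] at h1
    have h3 : 2 ^ (j + 1) * T.count (2 ^ (j + 1)) = 2 ^ (j + 1) * M.count (2 ^ (j + 1)) := by
      omega
    exact Nat.eq_of_mul_eq_mul_left (pow_pos two_pos _) h3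
  · rw [Multiset.count_eq_zero_of_notMem (fun hmem => hn (hT n hmem)),
      Multiset.count_eq_zero_of_notMem (fun hmem => hn (hM n hmem))]

/-- Support card + fixed point count = total. -/
lemma support_card_add_fixed {α : Type*} [Fintype α] [DecidableEq α] (τ : Equiv.Perm α) :
    τ.support.card + Nat.card {x : α | τ x = x} = Fintype.card α := by
  classical
  have h1 : τ.support = Finset.univ.filter (fun x => ¬ τ x = x) := by
    ext x; simp [Equiv.Perm.mem_support]
  have h2 : Nat.card {x : α | τ x = x} = (Finset.univ.filter (fun x => τ x = x)).card := by
    rw [Nat.card_eq_fintype_card, Fintype.card_subtype]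
    congr 1
  rw [h1, h2, ← Finset.card_univ, add_comm]
  exact Finset.card_filter_add_card_filter_not _

lemma filter_sum_finset {ι : Type*} (s : Finset ι) (f : ι → Multiset ℕ)
    (p : ℕ → Prop) [DecidablePred p] :
    ((∑ l ∈ s, f l).filter p).sum = ∑ l ∈ s, ((f l).filter p).sum := by
  classical
  induction s using Finset.induction with
  | empty => simp
  | insert _ _ hx ih =>
    rw [Finset.sum_insert hx, Finset.sum_insert hx, Multiset.filter_add,
      Multiset.sum_add, ih]

/-- Let `m ≥ 3`, `1 ≤ s ≤ m − 3`, and `r` odd. The permutation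
`π_a` of `ℤ_{2^m}` given by multiplication by `a = 3^(2^s·r)` has cycle type
`x_1^(2^(s+2)) · Π_{l=s+3}^{m} x_{2^(l−2−s)}^(2^(s+1))`: it has exactly `2^(s+2)`
fixed points, and for each `s+3 ≤ l ≤ m` exactly `2^(s+1)` cycles of length
`2^(l−2−s)` (the cycle type multiset records the nontrivial cycle lengths). -/
theorem cycle_type_three_pow_two_pow (m s r : ℕ) (hm : 3 ≤ m) (hs1 : 1 ≤ s)
    (hs2 : s ≤ m - 3) (hr : Odd r) :
    Nat.card {x : ZMod (2 ^ m) | (3 : ZMod (2 ^ m)) ^ (2 ^ s * r) * x = x}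
        = 2 ^ (s + 2) ∧
    Equiv.Perm.cycleType
        (MulAction.toPerm
          (ZMod.unitOfCoprime (3 ^ (2 ^ s * r))
              (Nat.Coprime.pow (2 ^ s * r) m (by norm_num)) :
            (ZMod (2 ^ m))ˣ) :
          Equiv.Perm (ZMod (2 ^ m)))
      = ∑ l ∈ Finset.Icc (s + 3) m,
          Multiset.replicate (2 ^ (s + 1)) (2 ^ (l - 2 - s)) := by

  haveI hNZ : NeZero ((2:ℕ) ^ m) := ⟨by positivity⟩
  set a : ℕ := 3 ^ (2 ^ s * r) with ha
  have hkey : ∀ j : ℕ, ∃ u, Odd u ∧ a ^ (2 ^ j) = 2 ^ (s + j + 2) * u + 1 := by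
    intro j
    obtain ⟨u, hu, h⟩ := three_pow_key r hr (s + j - 1)
    refine ⟨u, hu, ?_⟩
    rw [show s + j - 1 + 1 = s + j by omega, show s + j - 1 + 3 = s + j + 2 by omega] at h
    rw [ha, ← pow_mul, show 2 ^ s * r * 2 ^ j = 2 ^ (s + j) * r by rw [pow_add]; ring]
    exact h
  constructor
  · -- fixed point count
    obtain ⟨u, hu, h⟩ := hkey 0
    simp only [pow_zero, pow_one] at h
    have hb : (3 : ZMod (2 ^ m)) ^ (2 ^ s * r) = 2 ^ (s + 2) * (u : ZMod (2 ^ m)) + 1 := by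
      have : (3 : ZMod (2 ^ m)) ^ (2 ^ s * r) = ((a : ℕ) : ZMod (2 ^ m)) := by
        rw [ha]; push_cast; ring
      rw [this, h, show s + 0 + 2 = s + 2 by omega]
      push_cast; ring
    rw [card_fixed_mul m (s + 2) u hu _ hb, min_eq_left (by omega)]
  · -- cycle type
    have main2 : ∀ u₀ : (ZMod (2 ^ m))ˣ, ((u₀ : ZMod (2 ^ m)) = ((a : ℕ) : ZMod (2 ^ m))) →
        (MulAction.toPerm u₀ : Equiv.Perm (ZMod (2 ^ m))).cycleType
          = ∑ l ∈ Finset.Icc (s + 3) m,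
              Multiset.replicate (2 ^ (s + 1)) (2 ^ (l - 2 - s)) := by
      intro u₀ hu₀
      set σ : Equiv.Perm (ZMod (2 ^ m)) := MulAction.toPerm u₀ with hσdef
      have hσpow : ∀ (n : ℕ) (x : ZMod (2 ^ m)),
          (σ ^ n) x = ((a ^ n : ℕ) : ZMod (2 ^ m)) * x := by
        intro n x
        have hpow : σ ^ n = MulAction.toPerm (u₀ ^ n) := by
          rw [show σ = MulAction.toPermHom _ _ u₀ from rfl, ← map_pow]; rfl
        rw [hpow, MulAction.toPerm_apply, Units.smul_def, smul_eq_mul,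
          Units.val_pow_eq_pow_val, hu₀]
        norm_cast
      have hfix : ∀ j : ℕ, Nat.card {x : ZMod (2 ^ m) | (σ ^ (2 ^ j)) x = x}
          = 2 ^ (min (s + j + 2) m) := by
        intro j
        obtain ⟨u, hu, h⟩ := hkey j
        have hset : {x : ZMod (2 ^ m) | (σ ^ (2 ^ j)) x = x}
            = {x : ZMod (2 ^ m) | ((a ^ (2 ^ j) : ℕ) : ZMod (2 ^ m)) * x = x} := by
          ext x; rw [Set.mem_setOf_eq, Set.mem_setOf_eq, hσpow]
        rw [hset]
        apply card_fixed_mul m (s + j + 2) u hu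
        rw [h]; push_cast; ring
      have hsup : ∀ j : ℕ, ((σ ^ (2 ^ j)).support).card
          = 2 ^ m - 2 ^ (min (s + j + 2) m) := by
        intro j
        have h1 := support_card_add_fixed (σ ^ (2 ^ j))
        rw [hfix j, ZMod.card] at h1
        omega
      have hord : orderOf σ ∣ 2 ^ m := by
        apply orderOf_dvd_of_pow_eq_one
        ext x
        rw [hσpow]
        obtain ⟨u, hu, h⟩ := hkey m
        rw [h]
        have h0 : (((2 ^ (s + m + 2) * u + 1 : ℕ)) : ZMod (2 ^ m))
            = (2 : ZMod (2 ^ m)) ^ (s + m + 2) * (u : ZMod (2 ^ m)) + 1 := by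
          push_cast; ring
        have h00 : (2 : ZMod (2 ^ m)) ^ (s + m + 2) = 0 := by
          have h2 : (((2 : ℕ) ^ (s + m + 2) : ℕ) : ZMod (2 ^ m)) = 0 :=
            (ZMod.natCast_eq_zero_iff _ _).2 (pow_dvd_pow 2 (by omega))
          push_cast at h2; exact h2
        rw [h0, h00]
        simp
      have hT : ∀ x ∈ σ.cycleType, ∃ i, 1 ≤ i ∧ x = 2 ^ i := by
        intro x hx
        have hdvd : x ∣ 2 ^ m := by
          have h1 : x ∣ σ.cycleType.lcm := Multiset.dvd_lcm hx
          rw [Equiv.Perm.lcm_cycleType] at h1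
          exact h1.trans hord
        obtain ⟨k, hk, rfl⟩ := (Nat.dvd_prime_pow Nat.prime_two).1 hdvd
        have h2 := Equiv.Perm.two_le_of_mem_cycleType hx
        have hk0 : k ≠ 0 := by rintro rfl; simp at h2
        exact ⟨k, by omega, rfl⟩
      have hM : ∀ x ∈ ∑ l ∈ Finset.Icc (s + 3) m,
          Multiset.replicate (2 ^ (s + 1)) (2 ^ (l - 2 - s)), ∃ i, 1 ≤ i ∧ x = 2 ^ i := by
        intro x hx
        rw [Multiset.mem_sum] at hx
        obtain ⟨l, hl, hx⟩ := hx
        rw [Finset.mem_Icc] at hl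
        rw [Multiset.eq_of_mem_replicate hx]
        exact ⟨l - 2 - s, by omega, rfl⟩
      apply multiset_eq_of_filter_sums _ _ hT hM
      intro j
      rw [← card_support_pow_eq, hsup j, filter_sum_finset]
      have hterm : ∀ l ∈ Finset.Icc (s + 3) m,
          ((Multiset.replicate (2 ^ (s + 1)) (2 ^ (l - 2 - s))).filter
            (fun d => ¬ d ∣ 2 ^ j)).sum
          = if s + 3 + j ≤ l then 2 ^ (l - 1) else 0 := by
        intro l hl
        rw [Finset.mem_Icc] at hl
        by_cases hc : s + 3 + j ≤ l
        · rw [if_pos hc, Multiset.filter_eq_self.2 (fun d hd => by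
            rw [Multiset.eq_of_mem_replicate hd,
              Nat.pow_dvd_pow_iff_le_right one_lt_two]; omega),
            Multiset.sum_replicate, smul_eq_mul, ← pow_add]
          congr 1; omega
        · rw [if_neg hc, Multiset.filter_eq_nil.2 (fun d hd => by
            rw [Multiset.eq_of_mem_replicate hd]
            simp only [Decidable.not_not]
            exact pow_dvd_pow 2 (by omega)), Multiset.sum_zero]
      rw [Finset.sum_congr rfl hterm, ← Finset.sum_filter,
        show Finset.filter (fun l => s + 3 + j ≤ l) (Finset.Icc (s + 3) m)
            = Finset.Icc (s + 3 + j) m from by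
          ext l; simp only [Finset.mem_filter, Finset.mem_Icc]; omega,
        sum_Icc_two_pow (s + 3 + j) m (by omega),
        show s + 3 + j - 1 = s + j + 2 by omega]
      rcases le_or_gt (s + j + 2) m with h | h
      · rw [min_eq_left h]
      · rw [min_eq_right (by omega)]
        have h1 : (2:ℕ) ^ m ≤ 2 ^ (s + j + 2) := Nat.pow_le_pow_right (by norm_num) (by omega)
        omega
    exact main2 _ (ZMod.coe_unitOfCoprime _ _)
end

section
/- Let p be an odd prime, m ≥ 1, let β be a primitive root modulo p^m, and let 1 ≤ k ≤ φ(p^m). Then the permutation π_{β^k} of Z_{p^m} given by multiplication by β^k has cycle type Π_{i=0}^{m} x_{u(i,k)}^{v(i,k)}, where v(i,k) = gcd(φ(p^i), k) and u(i,k) = φ(p^i)/v(i,k); that is, for each 0 ≤ i ≤ m, the elements of Z_{p^m} of additive order p^i split into exactly v(i,k) cycles of π_{β^k}, each of length u(i,k). -/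
open Function Subgroup

private lemma aux_mul_eq_zero {n i : ℕ} [NeZero n] (h : i ∣ n) (x : ZMod n)
    (hx : addOrderOf x = i) (a : ZMod n) :
    a * x = 0 ↔ ZMod.castHom h (ZMod i) a = 0 := by
  haveI : NeZero i := ⟨fun h0 => NeZero.ne n (Nat.eq_zero_of_zero_dvd (h0 ▸ h))⟩
  have h1 : a * x = a.val • x := by
    rw [nsmul_eq_mul, ZMod.natCast_val, ZMod.cast_id]
  have h2 : ZMod.castHom h (ZMod i) a = ((a.val : ℕ) : ZMod i) := by
    rw [ZMod.castHom_apply, ZMod.natCast_val]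
  rw [h1, h2, ZMod.natCast_eq_zero_iff, ← hx,
    ← addOrderOf_dvd_iff_nsmul_eq_zero]

private lemma aux_mul_eq_self {n i : ℕ} [NeZero n] (h : i ∣ n) (x : ZMod n)
    (hx : addOrderOf x = i) (c : ZMod n) :
    c * x = x ↔ ZMod.castHom h (ZMod i) c = 1 := by
  have := aux_mul_eq_zero h x hx (c - 1)
  rwa [sub_mul, one_mul, sub_eq_zero, map_sub, map_one, sub_eq_zero] at this

private lemma aux_orderOf_cast {n i : ℕ} [NeZero n] (h : i ∣ n) (β : ℕ)
    (hβ : Nat.Coprime β n) (hgen : orderOf (β : ZMod n) = Nat.totient n) :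
    orderOf (β : ZMod i) = Nat.totient i := by
  haveI : NeZero i := ⟨fun h0 => NeZero.ne n (Nat.eq_zero_of_zero_dvd (h0 ▸ h))⟩
  set u := ZMod.unitOfCoprime β hβ with hu
  have hcoe : ((u : ZMod n)) = (β : ZMod n) := ZMod.coe_unitOfCoprime β hβ
  have hou : orderOf u = Nat.totient n := by rw [← orderOf_units, hcoe, hgen]
  have htop : Subgroup.zpowers u = ⊤ := by
    apply Subgroup.eq_top_of_card_eq
    rw [Nat.card_zpowers, hou, Nat.card_eq_fintype_card, ZMod.card_units_eq_totient]
  have hw : Subgroup.zpowers (ZMod.unitsMap h u) = ⊤ := by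
    rw [← MonoidHom.map_zpowers, htop,
      Subgroup.map_top_of_surjective _ (ZMod.unitsMap_surjective h)]
  have hmain : orderOf (ZMod.unitsMap h u) = Nat.totient i := by
    rw [← Nat.card_zpowers, hw, Subgroup.card_top, Nat.card_eq_fintype_card,
      ZMod.card_units_eq_totient]
  rw [← hmain, ← orderOf_units]
  congr 1
  rw [ZMod.unitsMap_def, Units.coe_map, MonoidHom.coe_coe, hcoe, map_natCast]

private lemma aux_minimalPeriod {n i : ℕ} [NeZero n] (h : i ∣ n) (g : ZMod n)
    (x : ZMod n) (hx : addOrderOf x = i) :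
    Function.minimalPeriod (fun y => g * y) x = orderOf (ZMod.castHom h (ZMod i) g) := by
  set g' := ZMod.castHom h (ZMod i) g with hg'
  have hper : ∀ N, Function.IsPeriodicPt (fun y => g * y) N x ↔ g' ^ N = 1 := by
    intro N
    rw [Function.IsPeriodicPt, Function.IsFixedPt, mul_left_iterate,
      aux_mul_eq_self h x hx, map_pow]
  apply Nat.dvd_antisymm
  · exact Function.IsPeriodicPt.minimalPeriod_dvd ((hper _).mpr (pow_orderOf_eq_one g'))
  · exact orderOf_dvd_of_pow_eq_one ((hper _).mp (Function.isPeriodicPt_minimalPeriod _ _))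

private lemma aux_card_sameCycle {α : Type*} [Fintype α] [DecidableEq α]
    (f : Equiv.Perm α) (x : α) :
    Nat.card {y // f.SameCycle x y} = Function.minimalPeriod f x := by
  set T := Function.minimalPeriod f x with hT
  have hperiod : Function.IsPeriodicPt (⇑f) (orderOf f) x := by
    rw [Function.IsPeriodicPt, Function.IsFixedPt, Equiv.Perm.iterate_eq_pow,
      pow_orderOf_eq_one]
    rfl
  have hTpos : 0 < T := hperiod.minimalPeriod_pos (orderOf_pos f)
  let e : Fin T → {y // f.SameCycle x y} := fun j =>
    ⟨f^[(j : ℕ)] x, ⟨((j : ℕ) : ℤ), by rw [zpow_natCast, ← Equiv.Perm.iterate_eq_pow]⟩⟩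
  have hbij : Function.Bijective e := by
    constructor
    · intro a b hab
      exact Fin.ext (Function.iterate_injOn_Iio_minimalPeriod a.2 b.2
        (Subtype.ext_iff.mp hab))
    · rintro ⟨y, hy⟩
      obtain ⟨j, hj, hjy⟩ := hy.exists_pow_eq'
      refine ⟨⟨j % T, Nat.mod_lt _ hTpos⟩, Subtype.ext ?_⟩
      show f^[j % T] x = y
      rw [Function.iterate_mod_minimalPeriod_eq, Equiv.Perm.iterate_eq_pow]
      exact hjy
  rw [← Nat.card_congr (Equiv.ofBijective e hbij), Nat.card_eq_fintype_card,
    Fintype.card_fin]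

/-- Let `p` be an odd prime, `m ≥ 1`, `β` a primitive root modulo
`p^m`, and `1 ≤ k ≤ φ(p^m)`. The permutation `π_{β^k}` of `ℤ_{p^m}` has cycle type
`Π_{i=0}^{m} x_{u(i,k)}^{v(i,k)}` where `v(i,k) = gcd(φ(p^i), k)` and
`u(i,k) = φ(p^i)/v(i,k)`: for each `0 ≤ i ≤ m`, the elements of additive order `p^i`
split into exactly `v(i,k)` cycles of `π_{β^k}`, each of length `u(i,k)`. -/
theorem cycle_type_primitive_root_pow (p m : ℕ) (hp : p.Prime) (hp2 : p ≠ 2)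
    (hm : 1 ≤ m) (β : ℕ) (hβ : Nat.Coprime β (p ^ m))
    (hgen : orderOf (β : ZMod (p ^ m)) = Nat.totient (p ^ m))
    (k : ℕ) (hk1 : 1 ≤ k) (hk2 : k ≤ Nat.totient (p ^ m)) :
    ∀ i ≤ m,
      (∀ x : ZMod (p ^ m), addOrderOf x = p ^ i →
        Function.minimalPeriod (fun y : ZMod (p ^ m) => (β : ZMod (p ^ m)) ^ k * y) x
          = Nat.totient (p ^ i) / Nat.gcd (Nat.totient (p ^ i)) k) ∧
      Nat.card (Quot fun x y : {x : ZMod (p ^ m) // addOrderOf x = p ^ i} =>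
          (MulAction.toPerm
            (ZMod.unitOfCoprime (β ^ k) (Nat.Coprime.pow_left k hβ))).SameCycle
            x.val y.val)
        = Nat.gcd (Nat.totient (p ^ i)) k := by
  classical
  intro i him
  haveI : NeZero (p ^ m) := ⟨pow_ne_zero m hp.ne_zero⟩
  have hdvd : p ^ i ∣ p ^ m := pow_dvd_pow p him
  haveI : NeZero (p ^ i) := ⟨pow_ne_zero i hp.ne_zero⟩
  have hβi : orderOf (β : ZMod (p ^ i)) = Nat.totient (p ^ i) :=
    aux_orderOf_cast hdvd β hβ hgen
  have hcastg : ZMod.castHom hdvd (ZMod (p ^ i)) ((β : ZMod (p ^ m)) ^ k)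
      = (β : ZMod (p ^ i)) ^ k := by
    rw [map_pow, map_natCast]
  have horder : orderOf (ZMod.castHom hdvd (ZMod (p ^ i)) ((β : ZMod (p ^ m)) ^ k))
      = Nat.totient (p ^ i) / Nat.gcd (Nat.totient (p ^ i)) k := by
    rw [hcastg, orderOf_pow' _ (Nat.one_le_iff_ne_zero.mp hk1), hβi]
  have hmp : ∀ x : ZMod (p ^ m), addOrderOf x = p ^ i →
      Function.minimalPeriod (fun y : ZMod (p ^ m) => (β : ZMod (p ^ m)) ^ k * y) x
        = Nat.totient (p ^ i) / Nat.gcd (Nat.totient (p ^ i)) k :=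
    fun x hx => (aux_minimalPeriod hdvd _ x hx).trans horder
  refine ⟨hmp, ?_⟩
  set ζ := ZMod.unitOfCoprime (β ^ k) (Nat.Coprime.pow_left k hβ) with hζ
  have hζcoe : (ζ : ZMod (p ^ m)) = (β : ZMod (p ^ m)) ^ k := by
    rw [hζ, ZMod.coe_unitOfCoprime]
    push_cast
    rfl
  set u := Nat.totient (p ^ i) / Nat.gcd (Nat.totient (p ^ i)) k with hu
  set S := {x : ZMod (p ^ m) // addOrderOf x = p ^ i} with hS
  set r : S → S → Prop :=
    fun x y => (MulAction.toPerm ζ).SameCycle x.val y.val with hr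
  have hrequiv : Equivalence r :=
    ⟨fun a => Equiv.Perm.SameCycle.refl _ _, fun h => h.symm, fun h1 h2 => h1.trans h2⟩
  have hperm : ⇑(MulAction.toPerm ζ) = fun y : ZMod (p ^ m) => (β : ZMod (p ^ m)) ^ k * y := by
    funext y
    rw [MulAction.toPerm_apply, Units.smul_def, hζcoe, smul_eq_mul]
  have horderpres : ∀ x y : ZMod (p ^ m), (MulAction.toPerm ζ).SameCycle x y →
      addOrderOf y = addOrderOf x := by
    rintro x y ⟨N, rfl⟩
    have h1 : ((MulAction.toPerm ζ) ^ N) x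
        = ((ζ ^ N : (ZMod (p ^ m))ˣ) : ZMod (p ^ m)) * x := by
      rw [← MulAction.toPermHom_apply ((ZMod (p ^ m))ˣ) (ZMod (p ^ m)), ← map_zpow,
        MulAction.toPermHom_apply, MulAction.toPerm_apply, Units.smul_def, smul_eq_mul]
    rw [h1]
    exact addOrderOf_injective
      (AddMonoidHom.mulLeft ((ζ ^ N : (ZMod (p ^ m))ˣ) : ZMod (p ^ m)))
      ((ζ ^ N).isUnit.mul_right_injective) x
  have hquot : ∀ x y : S, (Quot.mk r y = Quot.mk r x) ↔ r y x := by
    intro x y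
    rw [Quot.eq, Equivalence.eqvGen_iff hrequiv]
  have hfiber : ∀ x : S, Nat.card {y : S // Quot.mk r y = Quot.mk r x} = u := by
    intro x
    have e1 : {y : S // Quot.mk r y = Quot.mk r x} ≃
        {y : ZMod (p ^ m) // (MulAction.toPerm ζ).SameCycle x.val y} :=
      { toFun := fun y => ⟨y.val.val, ((hquot x y.val).mp y.prop).symm⟩
        invFun := fun z => ⟨⟨z.val, by rw [horderpres x.val z.val z.prop, x.prop]⟩,
          (hquot x _).mpr z.prop.symm⟩
        left_inv := fun y => Subtype.ext (Subtype.ext rfl)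
        right_inv := fun z => rfl }
    rw [Nat.card_congr e1, aux_card_sameCycle _ _, hperm, hmp x.val x.prop]
  have hcardS : Nat.card S = Nat.totient (p ^ i) := by
    rw [Nat.card_eq_fintype_card, Fintype.card_subtype]
    have := IsAddCyclic.card_addOrderOf_eq_totient (α := ZMod (p ^ m))
      (d := p ^ i) (by rw [ZMod.card]; exact pow_dvd_pow p him)
    convert this using 2
  letI : Fintype (Quot r) := Fintype.ofFinite _
  have hsum : Nat.card S = Nat.card (Quot r) * u := by
    rw [Nat.card_congr (Equiv.sigmaFiberEquiv (Quot.mk r)).symm,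
      Nat.card_eq_fintype_card, Fintype.card_sigma]
    have : ∀ q : Quot r, Fintype.card {y : S // Quot.mk r y = q} = u := by
      refine Quot.ind ?_
      intro x
      rw [← Nat.card_eq_fintype_card, hfiber x]
    simp only [this, Finset.sum_const, Finset.card_univ, smul_eq_mul,
      Nat.card_eq_fintype_card]
  have hgcddvd : Nat.gcd (Nat.totient (p ^ i)) k ∣ Nat.totient (p ^ i) :=
    Nat.gcd_dvd_left _ _
  have htotpos : 0 < Nat.totient (p ^ i) := Nat.totient_pos.mpr (pow_pos hp.pos i)
  have hupos : 0 < u := Nat.div_pos (Nat.le_of_dvd htotpos hgcddvd)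
    (Nat.gcd_pos_of_pos_left _ htotpos)
  have hmul : Nat.gcd (Nat.totient (p ^ i)) k * u = Nat.totient (p ^ i) := by
    rw [hu, Nat.mul_div_cancel' hgcddvd]
  apply Nat.eq_of_mul_eq_mul_right hupos
  rw [← hsum, hcardS, hmul]
end
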